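/- arXiv:1608.01589 — 4 statements merged into one kernel-verified Lean document; each statement's English description precedes it below -/
import Mathlib

section
/- For every integer n ≥ 2, the chromatic number of the total Kneser graph satisfies χ(KG(n)) ≤ n·⌈log₂(n/2)⌉ + 1. -/
/-- A partition of `{0,…,n-1}` (modeled as `Fin n`) into an unordered pair of nonempty
disjoint subsets covering everything, modeled as a 2-element finset of parts. -/
def TKPart (n : ℕ) (P : Finset (Finset (Fin n))) : Prop :=
  P.card = 2 ∧ (∀ A ∈ P, A.Nonempty) ∧
    (∀ A ∈ P, ∀ B ∈ P, A ≠ B → Disjoint A B) ∧ P.sup id = Finset.univ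

/-- Vertices of the total Kneser graph. -/
abbrev TKVert (n : ℕ) := {P : Finset (Finset (Fin n)) // TKPart n P}

/-- The total Kneser graph `KG(n)`: two distinct partitions are adjacent iff they are
nested, i.e. some part of one is contained in some part of the other. -/
def KG (n : ℕ) : SimpleGraph (TKVert n) where
  Adj P Q := P ≠ Q ∧
    ((∃ A ∈ P.1, ∃ C ∈ Q.1, A ⊆ C) ∨ (∃ C ∈ Q.1, ∃ A ∈ P.1, C ⊆ A))
  symm := by
    constructor
    rintro P Q ⟨hne, h⟩
    refine ⟨hne.symm, ?_⟩
    rcases h with ⟨A, hA, C, hC, hAC⟩ | ⟨C, hC, A, hA, hCA⟩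
    · exact Or.inr ⟨A, hA, C, hC, hAC⟩
    · exact Or.inl ⟨C, hC, A, hA, hCA⟩
  loopless := ⟨fun P h => h.1 rfl⟩


/-! ### Auxiliary lemmas -/

/-- Structure of a vertex: together with any part `A`, the complement is a part
and the partition is exactly `{A, Aᶜ}`. -/
lemma TKPart.parts {n : ℕ} {P : Finset (Finset (Fin n))} (hP : TKPart n P)
    {A : Finset (Fin n)} (hA : A ∈ P) : Aᶜ ∈ P ∧ P = {A, Aᶜ} := by
  obtain ⟨a, b, hab, rfl⟩ := Finset.card_eq_two.mp hP.1
  have ha : a ∈ ({a, b} : Finset (Finset (Fin n))) := by simp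
  have hb : b ∈ ({a, b} : Finset (Finset (Fin n))) := by simp
  have hdisj : Disjoint a b := hP.2.2.1 a ha b hb hab
  have hsup : a ∪ b = Finset.univ := by
    have := hP.2.2.2
    simpa using this
  have hbc : b = aᶜ := by
    ext x
    simp only [Finset.mem_compl]
    constructor
    · intro hx hxa
      exact Finset.disjoint_left.mp hdisj hxa hx
    · intro hx
      have hxu : x ∈ a ∪ b := by rw [hsup]; exact Finset.mem_univ x
      rcases Finset.mem_union.mp hxu with h | h
      · exact absurd h hx
      · exact h
  rcases Finset.mem_insert.mp hA with rfl | hA'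
  · subst hbc; exact ⟨hb, rfl⟩
  · have : A = b := Finset.mem_singleton.mp hA'
    subst this
    subst hbc
    rw [compl_compl]
    exact ⟨ha, Finset.pair_comm _ _⟩

/-- The number of elements of `S` that are `≤` its `i`-th smallest element is `i+1`. -/
lemma card_filter_le_orderEmbOfFin {n : ℕ} (S : Finset (Fin n)) (i : Fin S.card) :
    (S.filter (fun y => y ≤ S.orderEmbOfFin rfl i)).card = (i : ℕ) + 1 := by
  have himg : S.filter (fun y => y ≤ S.orderEmbOfFin rfl i)
      = (Finset.Iic i).image (S.orderEmbOfFin rfl) := by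
    ext y
    simp only [Finset.mem_filter, Finset.mem_image, Finset.mem_Iic]
    constructor
    · rintro ⟨hyS, hy⟩
      have hrange : y ∈ Set.range (S.orderEmbOfFin rfl) := by
        rw [Finset.range_orderEmbOfFin]; exact hyS
      obtain ⟨j, rfl⟩ := hrange
      exact ⟨j, by rwa [OrderEmbedding.le_iff_le] at hy, rfl⟩
    · rintro ⟨j, hj, rfl⟩
      exact ⟨Finset.orderEmbOfFin_mem _ _ _, (S.orderEmbOfFin rfl).monotone hj⟩
  rw [himg, Finset.card_image_of_injective _ (S.orderEmbOfFin rfl).injective, Fin.card_Iic]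

lemma idx_lt {n : ℕ} {S : Finset (Fin n)} (h : S.card ≠ 0) :
    2 ^ (Nat.log 2 S.card + 1) - S.card - 1 < S.card := by
  have h1 : 2 ^ Nat.log 2 S.card ≤ S.card := Nat.pow_log_le_self 2 h
  have h2 : S.card < 2 ^ (Nat.log 2 S.card + 1) := Nat.lt_pow_succ_log_self (by norm_num) _
  have h3 : 2 ^ (Nat.log 2 S.card + 1) = 2 * 2 ^ (Nat.log 2 S.card) := by ring
  omega

/-- The marked element of a nonempty finset: the element of rank `2^(⌊log₂ |S|⌋+1) - |S|`. -/
noncomputable def mark {n : ℕ} (S : Finset (Fin n)) (h : S.card ≠ 0) : Fin n :=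
  S.orderEmbOfFin rfl ⟨2 ^ (Nat.log 2 S.card + 1) - S.card - 1, idx_lt h⟩

lemma mark_mem {n : ℕ} (S : Finset (Fin n)) (h : S.card ≠ 0) : mark S h ∈ S :=
  Finset.orderEmbOfFin_mem _ _ _

lemma mark_card {n : ℕ} (S : Finset (Fin n)) (h : S.card ≠ 0) :
    (S.filter (fun y => y ≤ mark S h)).card = 2 ^ (Nat.log 2 S.card + 1) - S.card := by
  rw [mark, card_filter_le_orderEmbOfFin]
  have h1 : 2 ^ Nat.log 2 S.card ≤ S.card := Nat.pow_log_le_self 2 h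
  have h2 : S.card < 2 ^ (Nat.log 2 S.card + 1) := Nat.lt_pow_succ_log_self (by norm_num) _
  have h3 : 2 ^ (Nat.log 2 S.card + 1) = 2 * 2 ^ (Nat.log 2 S.card) := by ring
  simp only []
  omega

/-- Rank comparison: nested sets in the same dyadic size class with the same marked
rank element must be equal. -/
lemma rank_force {n j : ℕ} {S T : Finset (Fin n)} {x : Fin n} (hST : S ⊆ T)
    (hS : (S.filter (fun y => y ≤ x)).card = 2 ^ (j + 1) - S.card)
    (hT : (T.filter (fun y => y ≤ x)).card = 2 ^ (j + 1) - T.card)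
    (hSlt : S.card ≤ 2 ^ (j + 1)) (hTlt : T.card ≤ 2 ^ (j + 1)) : S = T := by
  have hf : (S.filter (fun y => y ≤ x)).card ≤ (T.filter (fun y => y ≤ x)).card :=
    Finset.card_le_card (Finset.filter_subset_filter _ hST)
  have hcard : T.card ≤ S.card := by omega
  exact Finset.eq_of_subset_of_card_le hST hcard

/-- If neither partition has a small part, nesting forces equality. -/
lemma nest_eq_of_no_small {n : ℕ} (P Q : TKVert n)
    (hP : ¬ ∃ A ∈ P.1, 2 * A.card < n) (hQ : ¬ ∃ C ∈ Q.1, 2 * C.card < n)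
    {A C : Finset (Fin n)} (hA : A ∈ P.1) (hC : C ∈ Q.1) (hAC : A ⊆ C) : P = Q := by
  push_neg at hP hQ
  obtain ⟨hAc, hPeq⟩ := P.2.parts hA
  obtain ⟨hCc, hQeq⟩ := Q.2.parts hC
  have h1 : A.card + Aᶜ.card = n := by
    have := Finset.card_add_card_compl A
    simpa using this
  have h2 : C.card + Cᶜ.card = n := by
    have := Finset.card_add_card_compl C
    simpa using this
  have hA1 := hP A hA
  have hA2 := hP Aᶜ hAc
  have hC1 := hQ C hC
  have hC2 := hQ Cᶜ hCc
  have hcard : C.card ≤ A.card := by omega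
  have : A = C := Finset.eq_of_subset_of_card_le hAC hcard
  subst this
  exact Subtype.ext (hPeq.trans hQeq.symm)

lemma choose_card_ne {n : ℕ} (P : TKVert n) (h : ∃ A ∈ P.1, 2 * A.card < n) :
    h.choose.card ≠ 0 := by
  have := Finset.card_pos.mpr (P.2.2.1 h.choose h.choose_spec.1)
  omega

lemma choose_log_lt {n L : ℕ} (hn : n ≤ 2 ^ (L + 2)) (P : TKVert n)
    (h : ∃ A ∈ P.1, 2 * A.card < n) : Nat.log 2 h.choose.card < L + 1 := by
  apply Nat.log_lt_of_lt_pow (choose_card_ne P h)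
  have h1 : 2 * h.choose.card < n := h.choose_spec.2
  have h3 : 2 ^ (L + 2) = 2 * 2 ^ (L + 1) := by ring
  omega

/-- The coloring of the total Kneser graph. -/
noncomputable def tkCol (n L : ℕ) (hn : n ≤ 2 ^ (L + 2)) (P : TKVert n) :
    Option (Fin n × Fin (L + 1)) :=
  if h : ∃ A ∈ P.1, 2 * A.card < n then
    some (mark h.choose (choose_card_ne P h),
      ⟨Nat.log 2 h.choose.card, choose_log_lt hn P h⟩)
  else none

/-- Both partitions have a small part: equal colors plus nesting forces equality. -/
lemma small_small {n : ℕ} (P Q : TKVert n) {S T : Finset (Fin n)}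
    (hSmem : S ∈ P.1) (hTmem : T ∈ Q.1) (hSlt : 2 * S.card < n) (hTlt : 2 * T.card < n)
    (hSne : S.card ≠ 0) (hTne : T.card ≠ 0)
    (hx : mark S hSne = mark T hTne) (hj : Nat.log 2 S.card = Nat.log 2 T.card)
    {A C : Finset (Fin n)} (hA : A ∈ P.1) (hC : C ∈ Q.1) (hAC : A ⊆ C) : P = Q := by
  set x := mark S hSne with hxdef
  have hxS : x ∈ S := mark_mem S hSne
  have hxT : x ∈ T := by rw [hx]; exact mark_mem T hTne
  have hSfil : (S.filter (fun y => y ≤ x)).card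
      = 2 ^ (Nat.log 2 S.card + 1) - S.card := mark_card S hSne
  have hTfil : (T.filter (fun y => y ≤ x)).card
      = 2 ^ (Nat.log 2 S.card + 1) - T.card := by
    rw [hx, hj]; exact mark_card T hTne
  have hSub : S.card < 2 ^ (Nat.log 2 S.card + 1) :=
    Nat.lt_pow_succ_log_self (by norm_num) _
  have hTub : T.card < 2 ^ (Nat.log 2 S.card + 1) := by
    rw [hj]; exact Nat.lt_pow_succ_log_self (by norm_num) _
  obtain ⟨hScmem, hPeq⟩ := P.2.parts hSmem
  obtain ⟨hTcmem, hQeq⟩ := Q.2.parts hTmem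
  have hcardS : S.card + Sᶜ.card = n := by
    have := Finset.card_add_card_compl S; simpa using this
  have hcardT : T.card + Tᶜ.card = n := by
    have := Finset.card_add_card_compl T; simpa using this
  have hST : S = T → P = Q := by
    intro h
    refine Subtype.ext (hPeq.trans ?_)
    rw [h]
    exact hQeq.symm
  have hAcase : A = S ∨ A = Sᶜ := by
    rw [hPeq] at hA
    simpa using hA
  have hCcase : C = T ∨ C = Tᶜ := by
    rw [hQeq] at hC
    simpa using hC
  rcases hAcase with rfl | rfl
  · rcases hCcase with rfl | rfl
    · exact hST (rank_force hAC hSfil hTfil (le_of_lt hSub) (le_of_lt hTub))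
    · exact absurd (hAC hxS) (by simp [Finset.mem_compl, hxT])
  · rcases hCcase with rfl | rfl
    · have := Finset.card_le_card hAC
      omega
    · have hTS : T ⊆ S := by
        intro y hy
        by_contra hyS
        exact Finset.mem_compl.mp (hAC (Finset.mem_compl.mpr hyS)) hy
      exact hST (rank_force hTS hTfil hSfil (le_of_lt hTub) (le_of_lt hSub)).symm

/-- Key lemma: equal colors plus nesting forces equality of the partitions. -/
lemma tkCol_key {n L : ℕ} (hn : n ≤ 2 ^ (L + 2)) (P Q : TKVert n)
    (hcol : tkCol n L hn P = tkCol n L hn Q)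
    {A C : Finset (Fin n)} (hA : A ∈ P.1) (hC : C ∈ Q.1) (hAC : A ⊆ C) : P = Q := by
  by_cases hP : ∃ A ∈ P.1, 2 * A.card < n
  · by_cases hQ : ∃ C ∈ Q.1, 2 * C.card < n
    · rw [tkCol, tkCol, dif_pos hP, dif_pos hQ] at hcol
      simp only [Option.some.injEq, Prod.mk.injEq, Fin.mk.injEq] at hcol
      obtain ⟨hx, hj⟩ := hcol
      exact small_small P Q hP.choose_spec.1 hQ.choose_spec.1
        hP.choose_spec.2 hQ.choose_spec.2 (choose_card_ne P hP) (choose_card_ne Q hQ)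
        hx hj hA hC hAC
    · rw [tkCol, tkCol, dif_pos hP, dif_neg hQ] at hcol
      exact absurd hcol (by simp)
  · by_cases hQ : ∃ C ∈ Q.1, 2 * C.card < n
    · rw [tkCol, tkCol, dif_neg hP, dif_pos hQ] at hcol
      exact absurd hcol (by simp)
    · exact nest_eq_of_no_small P Q hP hQ hA hC hAC

/-- Colorability from the construction. -/
lemma tkColorable {n L : ℕ} (hn : n ≤ 2 ^ (L + 2)) :
    (KG n).Colorable (n * (L + 1) + 1) := by
  have C : (KG n).Coloring (Option (Fin n × Fin (L + 1))) := by
    refine SimpleGraph.Coloring.mk (tkCol n L hn) ?_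
    intro P Q hadj heq
    rcases hadj.2 with ⟨A, hA, C, hC, hAC⟩ | ⟨C, hC, A, hA, hCA⟩
    · exact hadj.1 (tkCol_key hn P Q heq hA hC hAC)
    · exact hadj.1 (tkCol_key hn Q P heq.symm hC hA hCA).symm
  have hc := C.colorable
  have hcard : Fintype.card (Option (Fin n × Fin (L + 1))) = n * (L + 1) + 1 := by
    simp [Fintype.card_option, Fintype.card_prod]
  rwa [hcard] at hc

/-- `χ(KG(n)) ≤ n⌈log₂(n/2)⌉ + 1`. -/
theorem chromatic_KG_upper (n : ℕ) (hn : 2 ≤ n) :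
    (KG n).chromaticNumber ≤ ((n * (⌈Real.logb 2 ((n : ℝ) / 2)⌉).toNat + 1 : ℕ) : ℕ∞) := by
  by_cases h2 : n = 2
  · subst h2
    have hone : ((2 : ℕ) : ℝ) / 2 = 1 := by norm_num
    rw [hone, Real.logb_one]
    simp only [Int.ceil_zero, Int.toNat_zero, Nat.mul_zero, Nat.zero_add]
    apply SimpleGraph.Colorable.chromaticNumber_le
    refine ⟨SimpleGraph.Coloring.mk (fun _ => 0) ?_⟩
    intro P Q hadj
    exfalso
    have hP : ¬ ∃ A ∈ P.1, 2 * A.card < 2 := by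
      push_neg
      intro A hA
      have := Finset.card_pos.mpr (P.2.2.1 A hA)
      omega
    have hQ : ¬ ∃ C ∈ Q.1, 2 * C.card < 2 := by
      push_neg
      intro C hC
      have := Finset.card_pos.mpr (Q.2.2.1 C hC)
      omega
    rcases hadj.2 with ⟨A, hA, C, hC, hAC⟩ | ⟨C, hC, A, hA, hCA⟩
    · exact hadj.1 (nest_eq_of_no_small P Q hP hQ hA hC hAC)
    · exact hadj.1 (nest_eq_of_no_small Q P hQ hP hC hA hCA).symm
  · have hn3 : 3 ≤ n := by omega
    set L' := (⌈Real.logb 2 ((n : ℝ) / 2)⌉).toNat with hL'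
    have h1 : (1 : ℝ) < (n : ℝ) / 2 := by
      have : (3 : ℝ) ≤ (n : ℝ) := by exact_mod_cast hn3
      linarith
    have hv : 0 < Real.logb 2 ((n : ℝ) / 2) := Real.logb_pos (by norm_num) h1
    have hceil : 1 ≤ ⌈Real.logb 2 ((n : ℝ) / 2)⌉ := Int.ceil_pos.mpr hv
    have hL1 : 1 ≤ L' := by omega
    have hnle : n ≤ 2 ^ (L' + 1) := by
      have hLv : Real.logb 2 ((n : ℝ) / 2) ≤ (L' : ℝ) := by
        refine le_trans (Int.le_ceil _) ?_
        rw [hL']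
        exact_mod_cast Int.self_le_toNat _
      have hhalf : (n : ℝ) / 2 ≤ 2 ^ L' := by
        calc (n : ℝ) / 2 = (2 : ℝ) ^ Real.logb 2 ((n : ℝ) / 2) :=
              (Real.rpow_logb (by norm_num) (by norm_num) (by linarith)).symm
          _ ≤ (2 : ℝ) ^ ((L' : ℕ) : ℝ) :=
              Real.rpow_le_rpow_of_exponent_le (by norm_num) hLv
          _ = 2 ^ L' := by rw [Real.rpow_natCast]
      have hfin : (n : ℝ) ≤ 2 ^ (L' + 1) := by rw [pow_succ]; linarith
      exact_mod_cast hfin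
    obtain ⟨L, hLeq⟩ : ∃ L, L' = L + 1 := ⟨L' - 1, by omega⟩
    rw [hLeq] at hnle ⊢
    exact (tkColorable hnle).chromaticNumber_le
end

section
/- Let n ≥ 2 and let S be an independent set in the total cyclic interval graph CG(n). Then for every partition {A,B} belonging to S, the cardinality of S is at most min(|A|,|B|). -/
/-- `A ⊆ Fin n` is a cyclic interval `{i, i+1, …, i+k-1} (mod n)` with `1 ≤ k ≤ n-1`. -/
def IsCyclicInterval {n : ℕ} (A : Finset (Fin n)) : Prop :=
  ∃ i k : ℕ, 1 ≤ k ∧ k ≤ n - 1 ∧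
    (↑A : Set (Fin n)) = {x : Fin n | ∃ j < k, (x : ℕ) = (i + j) % n}

/-- The vertices of the total cyclic interval graph: partitions both of whose parts are
cyclic intervals. -/
def CGSet (n : ℕ) : Set (TKVert n) := {P | ∀ A ∈ P.1, IsCyclicInterval A}

/-- The total cyclic interval graph `CG(n)`, the induced subgraph of `KG(n)` on partitions
into cyclic intervals. -/
def CG (n : ℕ) : SimpleGraph (CGSet n) := (KG n).induce (CGSet n)

section AuxLemmas
variable {n : ℕ}
open Fin.NatCast

lemma mod_two_cases {a m : ℕ} (h : a < 2 * m) :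
    (a % m = a ∧ a < m) ∨ (a % m = a - m ∧ m ≤ a) := by
  rcases lt_or_ge a m with h1 | h1
  · exact Or.inl ⟨Nat.mod_eq_of_lt h1, h1⟩
  · exact Or.inr ⟨by rw [Nat.mod_eq_sub_mod h1, Nat.mod_eq_of_lt (by omega)], h1⟩

lemma fin_sub_val [NeZero n] (a b : Fin n) : (a - b).val = (a.val + (n - b.val)) % n := by
  rw [Fin.sub_def]; simp [Nat.add_comm]

lemma mem_arc_iff [NeZero n] {A : Finset (Fin n)} {i k : ℕ} (hk : k ≤ n)
    (hA : (↑A : Set (Fin n)) = {x : Fin n | ∃ j < k, (x : ℕ) = (i + j) % n}) :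
    ∀ x : Fin n, x ∈ A ↔ (x - (i : Fin n)).val < k := by
  have h0 : 0 < n := Nat.pos_of_ne_zero (NeZero.ne n)
  intro x
  have hx : x ∈ A ↔ ∃ j < k, (x:ℕ) = (i + j) % n := by
    rw [← Finset.mem_coe, hA]; rfl
  have hiv : ((i : Fin n) : ℕ) = i % n := by simp [Fin.val_natCast]
  have hr : i % n < n := Nat.mod_lt _ h0
  have hxn : (x : ℕ) < n := x.is_lt
  rw [hx, fin_sub_val, hiv]
  constructor
  · rintro ⟨j, hj, hxv⟩
    have hjn : j < n := lt_of_lt_of_le hj hk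
    have hmod : (i + j) % n = (i % n + j) % n := by
      conv_lhs => rw [Nat.add_mod, Nat.mod_eq_of_lt hjn]
    rw [hmod] at hxv
    rcases mod_two_cases (show i % n + j < 2 * n by omega) with ⟨h1, h2⟩ | ⟨h1, h2⟩
    · have harg : (x:ℕ) + (n - i % n) = j + n := by omega
      rw [harg, Nat.add_mod_right, Nat.mod_eq_of_lt hjn]; exact hj
    · have harg : (x:ℕ) + (n - i % n) = j := by omega
      rw [harg, Nat.mod_eq_of_lt hjn]; exact hj
  · intro hlt
    refine ⟨((x:ℕ) + (n - i % n)) % n, hlt, ?_⟩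
    have hmod : ∀ j, (i + j) % n = (i % n + j % n) % n := fun j => Nat.add_mod i j n
    set j := ((x:ℕ) + (n - i % n)) % n with hjdef
    have hjn : j < n := Nat.mod_lt _ h0
    rw [hmod, Nat.mod_eq_of_lt hjn]
    rcases mod_two_cases (show (x:ℕ) + (n - i % n) < 2 * n by omega) with ⟨h1, h2⟩ | ⟨h1, h2⟩
    · have harg : i % n + j = (x:ℕ) + n := by omega
      rw [harg, Nat.add_mod_right, Nat.mod_eq_of_lt hxn]
    · have harg : i % n + j = (x:ℕ) := by omega
      rw [harg, Nat.mod_eq_of_lt hxn]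

lemma arc_card [NeZero n] {A : Finset (Fin n)} {i k : ℕ} (hk : k ≤ n)
    (hA : (↑A : Set (Fin n)) = {x : Fin n | ∃ j < k, (x : ℕ) = (i + j) % n}) :
    A.card = k := by
  have h0 : 0 < n := Nat.pos_of_ne_zero (NeZero.ne n)
  have himg : A = (Finset.range k).image (fun j => ((i + j : ℕ) : Fin n)) := by
    ext x
    rw [← Finset.mem_coe, hA, Finset.mem_image]
    constructor
    · rintro ⟨j, hj, hxv⟩
      exact ⟨j, Finset.mem_range.mpr hj, by
        apply Fin.ext; rw [Fin.val_natCast]; omega⟩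
    · rintro ⟨j, hj, rfl⟩
      exact ⟨j, Finset.mem_range.mp hj, by rw [Fin.val_natCast]⟩
  rw [himg, Finset.card_image_of_injOn, Finset.card_range]
  intro j1 hj1 j2 hj2 heq
  rw [Finset.mem_coe, Finset.mem_range] at hj1 hj2
  have h1 : (i + j1) % n = (i + j2) % n := by
    have := congrArg Fin.val heq
    rwa [Fin.val_natCast, Fin.val_natCast] at this
  have e1 : (i + j1) % n = (i % n + j1) % n := by
    conv_lhs => rw [Nat.add_mod, Nat.mod_eq_of_lt (by omega : j1 < n)]
  have e2 : (i + j2) % n = (i % n + j2) % n := by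
    conv_lhs => rw [Nat.add_mod, Nat.mod_eq_of_lt (by omega : j2 < n)]
  have hr : i % n < n := Nat.mod_lt _ h0
  rcases mod_two_cases (show i % n + j1 < 2 * n by omega) with ⟨a1, a2⟩ | ⟨a1, a2⟩ <;>
    rcases mod_two_cases (show i % n + j2 < 2 * n by omega) with ⟨b1, b2⟩ | ⟨b1, b2⟩ <;>
      omega

lemma part_cover {P : Finset (Finset (Fin n))} (hP : TKPart n P) (x : Fin n) :
    ∃ C ∈ P, x ∈ C := by
  have hx : x ∈ P.sup id := by rw [hP.2.2.2]; exact Finset.mem_univ x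
  simpa [Finset.mem_sup] using hx

lemma part_unique {P : Finset (Finset (Fin n))} (hP : TKPart n P) {C D : Finset (Fin n)}
    (hC : C ∈ P) (hD : D ∈ P) {x : Fin n} (hxC : x ∈ C) (hxD : x ∈ D) : C = D := by
  by_contra hne
  exact (Finset.disjoint_left.mp (hP.2.2.1 C hC D hD hne) hxC) hxD

lemma part_compl {P : Finset (Finset (Fin n))} (hP : TKPart n P) {C D : Finset (Fin n)}
    (hC : C ∈ P) (hD : D ∈ P) (hne : C ≠ D) : D = Cᶜ := by
  ext z
  rw [Finset.mem_compl]
  constructor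
  · intro hz hzc; exact (Finset.disjoint_left.mp (hP.2.2.1 C hC D hD hne) hzc) hz
  · intro hz
    obtain ⟨E, hE, hzE⟩ := part_cover hP z
    obtain ⟨X, Y, hXY, hPXY⟩ := Finset.card_eq_two.mp hP.1
    have hCP : C = X ∨ C = Y := by
      have := hC; rw [hPXY] at this; simpa using this
    have hDP : D = X ∨ D = Y := by
      have := hD; rw [hPXY] at this; simpa using this
    have hEP : E = X ∨ E = Y := by
      have := hE; rw [hPXY] at this; simpa using this
    have hED : E = D := by
      rcases hCP with rfl | rfl <;> rcases hDP with rfl | rfl <;>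
        rcases hEP with rfl | rfl <;>
          first | rfl | (exfalso; exact hXY rfl) | (exfalso; exact hz hzE) |
            (exfalso; exact hne rfl) | (exfalso; exact hXY rfl.symm)
    rwa [hED] at hzE

lemma downclosed_eq_range (T : Finset ℕ) (h : ∀ j j', j ≤ j' → j' ∈ T → j ∈ T) :
    T = Finset.range T.card := by
  have hsub : T ⊆ Finset.range T.card := by
    intro m hm
    rw [Finset.mem_range]
    have h1 : Finset.range (m+1) ⊆ T := by
      intro j hj
      exact h j m (by have := Finset.mem_range.mp hj; omega) hm
    have h2 := Finset.card_le_card h1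
    rw [Finset.card_range] at h2
    omega
  exact Finset.eq_of_subset_of_card_le hsub (by rw [Finset.card_range])

lemma val_shift [NeZero n] (u c : Fin n) (j : ℕ) (hj : j < n) :
    ((u + (j : Fin n)) - c).val = ((u - c).val + j) % n := by
  have h1 : u + (j : Fin n) - c = (u - c) + (j : Fin n) := add_sub_right_comm u (j : Fin n) c
  rw [h1, Fin.add_def, Fin.val_natCast, Nat.mod_eq_of_lt hj]

lemma end_anchor [NeZero n] (hn : 2 ≤ n) {C : Finset (Fin n)} {m : ℕ} {c₀ : Fin n}
    (hm1 : 1 ≤ m) (hm2 : m ≤ n - 1)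
    (memC : ∀ z : Fin n, z ∈ C ↔ (z - c₀).val < m)
    (x : Fin n) (hx : x ∈ C) (hx' : x + 1 ∉ C) :
    ∀ z : Fin n, z ∈ C ↔ (x - z).val < m := by
  have h0 : 0 < n := by omega
  set e := (x - c₀).val with hedef
  have he : e < m := (memC x).mp hx
  have hone : ((1 : Fin n) : ℕ) = 1 := by
    rw [Fin.val_one', Nat.mod_eq_of_lt (by omega)]
  have hx1 : ((x + 1) - c₀).val = (e + 1) % n := by
    have h1 : x + 1 - c₀ = (x - c₀) + 1 := add_sub_right_comm x 1 c₀
    rw [h1, Fin.add_def, hone]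
  have he1 : (e + 1) % n = e + 1 := Nat.mod_eq_of_lt (by omega)
  have hem : e = m - 1 := by
    have h2 : ¬ ((x + 1 - c₀).val < m) := fun h => hx' ((memC _).mpr h)
    rw [hx1, he1] at h2
    omega
  intro z
  set w := (z - c₀).val with hwdef
  have hwn : w < n := (z - c₀).is_lt
  have hxz : (x - z).val = (e + (n - w)) % n := by
    have h3 : x - z = (x - c₀) - (z - c₀) := (sub_sub_sub_cancel_right x z c₀).symm
    rw [h3, fin_sub_val]
  rw [memC z, ← hwdef, hxz, hem]
  rcases Nat.lt_or_ge (m - 1 + (n - w)) n with hlt | hge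
  · rw [Nat.mod_eq_of_lt hlt]; omega
  · rw [Nat.mod_eq_sub_mod hge, Nat.mod_eq_of_lt (by omega)]; omega

end AuxLemmas

open Fin.NatCast in
theorem aux_card_le (n : ℕ) (hn : 2 ≤ n) (S : Finset ↥(CGSet n))
    (hS : ∀ P ∈ S, ∀ Q ∈ S, ¬ (CG n).Adj P Q)
    (P : ↥(CGSet n)) (hP : P ∈ S) (A B : Finset (Fin n))
    (hA : A ∈ P.1.1) (hB : B ∈ P.1.1) (hAB : A ≠ B) :
    S.card ≤ A.card := by
  classical
  haveI : NeZero n := ⟨by omega⟩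
  obtain ⟨i, k, hk1, hk2, hAarc⟩ := P.2 A hA
  have hkn : k ≤ n := by omega
  have memA := mem_arc_iff hkn hAarc
  have hAcard : A.card = k := arc_card hkn hAarc
  set i₀ : Fin n := (i : Fin n) with hi0
  have hTK : TKPart n P.1.1 := P.1.2
  have hBA : B = Aᶜ := part_compl hTK hA hB hAB
  have memB : ∀ x : Fin n, x ∈ B ↔ k ≤ (x - i₀).val := by
    intro x
    rw [hBA, Finset.mem_compl, memA]
    omega
  have hi0A : i₀ ∈ A := by
    rw [memA, sub_self, Fin.val_zero]; omega
  set pd : ↥(CGSet n) → ℕ → Prop :=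
    fun Q j => ∃ E ∈ Q.1.1, i₀ ∈ E ∧ i₀ + (j : Fin n) ∈ E with hpd
  set f : ↥(CGSet n) → ℕ := fun Q => ((Finset.range k).filter (pd Q)).card with hf
  -- the key structural characterization
  have key : ∀ Q ∈ S, ∀ j, j < k → (pd Q j ↔ j < f Q) := by
    intro Q hQ
    set T := (Finset.range k).filter (pd Q) with hT
    have hdc : ∀ j j', j ≤ j' → j' ∈ T → j ∈ T := by
      intro j j' hle hj'
      rw [hT, Finset.mem_filter, Finset.mem_range] at hj' ⊢
      obtain ⟨hj'k, E, hE, hiE, hjE'⟩ := hj'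
      refine ⟨by omega, ?_⟩
      by_contra hno
      obtain ⟨C, hCQ, hiC⟩ := part_cover Q.1.2 i₀
      have hEC : E = C := part_unique Q.1.2 hE hCQ hiE hiC
      rw [hEC] at hjE'
      have hjC : i₀ + ((j : ℕ) : Fin n) ∉ C := fun h => hno ⟨C, hCQ, hiC, h⟩
      have hj0 : j ≠ 0 := by
        rintro rfl
        apply hjC
        simpa using hiC
      have hjj' : j ≠ j' := by
        rintro rfl
        exact hjC hjE'
      obtain ⟨c, m, hm1, hm2, hCarc⟩ := Q.2 C hCQ
      have memC := mem_arc_iff (show m ≤ n by omega) hCarc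
      set c₀ : Fin n := (c : Fin n) with hc0
      set d := (i₀ - c₀).val with hd
      have hdn : d < n := (i₀ - c₀).is_lt
      have hdm : d < m := (memC i₀).mp hiC
      have hvj : ((i₀ + ((j:ℕ) : Fin n)) - c₀).val = (d + j) % n :=
        val_shift i₀ c₀ j (by omega)
      have hvj' : ((i₀ + ((j':ℕ) : Fin n)) - c₀).val = (d + j') % n :=
        val_shift i₀ c₀ j' (by omega)
      have hjm : m ≤ (d + j) % n := by
        have h4 : ¬ ((i₀ + ((j:ℕ) : Fin n)) ∈ C) := hjC
        rw [memC, hvj] at h4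
        omega
      have hj'm : (d + j') % n < m := by
        rw [← hvj']
        exact (memC _).mp hjE'
      have hBC : ¬ B ⊆ C := by
        by_cases hQP : Q = P
        · subst hQP
          have hCA : C = A := part_unique Q.1.2 hCQ hA hiC hi0A
          obtain ⟨b, hb⟩ := Q.1.2.2.1 B hB
          intro hsub
          have hbC := hsub hb
          rw [hCA] at hbC
          rw [hBA, Finset.mem_compl] at hb
          exact hb hbC
        · intro hsub
          apply hS P hP Q hQ
          exact And.intro (fun h => hQP (Subtype.ext h).symm) (Or.inl ⟨B, hB, C, hCQ, hsub⟩)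
      apply hBC
      intro z hz
      have hs : k ≤ (z - i₀).val := (memB z).mp hz
      have hsn : (z - i₀).val < n := (z - i₀).is_lt
      rw [memC z]
      have hzc : (z - c₀).val = ((z - i₀).val + d) % n := by
        have h3 : z - c₀ = (z - i₀) + (i₀ - c₀) := (sub_add_sub_cancel z i₀ c₀).symm
        rw [h3, Fin.add_def]
      rw [hzc]
      set s := (z - i₀).val
      rcases mod_two_cases (show d + j < 2*n by omega) with ⟨p1,p2⟩|⟨p1,p2⟩ <;>
        rcases mod_two_cases (show d + j' < 2*n by omega) with ⟨q1,q2⟩|⟨q1,q2⟩ <;>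
          rcases mod_two_cases (show s + d < 2*n by omega) with ⟨g1,g2⟩|⟨g1,g2⟩ <;>
            omega
    have hTr := downclosed_eq_range T hdc
    intro j hjk
    constructor
    · intro hex
      have hjT : j ∈ T := by
        rw [hT, Finset.mem_filter]
        exact ⟨Finset.mem_range.mpr hjk, hex⟩
      rw [hTr, Finset.mem_range] at hjT
      exact hjT
    · intro hlt
      have hjT : j ∈ T := by
        rw [hTr]
        exact Finset.mem_range.mpr hlt
      exact (Finset.mem_filter.mp hjT).2
  have hmaps : ∀ Q ∈ S, f Q ∈ Finset.Icc 1 k := by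
    intro Q hQ
    rw [Finset.mem_Icc]
    constructor
    · have h0T : (0 : ℕ) ∈ (Finset.range k).filter (pd Q) := by
        rw [Finset.mem_filter, Finset.mem_range]
        obtain ⟨C, hCQ, hiC⟩ := part_cover Q.1.2 i₀
        exact ⟨by omega, ⟨C, hCQ, hiC, by simpa using hiC⟩⟩
      exact Finset.card_pos.mpr ⟨0, h0T⟩
    · calc f Q ≤ (Finset.range k).card := Finset.card_filter_le _ _
        _ = k := Finset.card_range k
  have hinj : Set.InjOn f ↑S := by
    intro Q hQ Q' hQ' hff
    rw [Finset.mem_coe] at hQ hQ'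
    have hfm := hmaps Q hQ
    rw [Finset.mem_Icc] at hfm
    by_cases htk' : f Q = k
    · have hsubA : ∀ R, R ∈ S → f R = k → R = P := by
        intro R hR hfR
        obtain ⟨C, hCQ, hiC⟩ := part_cover R.1.2 i₀
        have hACsub : A ⊆ C := by
          intro x hx
          have hj : (x - i₀).val < k := (memA x).mp hx
          have hpdx : pd R (x - i₀).val := (key R hR _ hj).mpr (by rw [hfR]; exact hj)
          obtain ⟨E, hE, hiE, hxE⟩ := hpdx
          have hEC' : E = C := part_unique R.1.2 hE hCQ hiE hiC
          have hxx : i₀ + (((x - i₀).val : ℕ) : Fin n) = x := by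
            rw [Fin.cast_val_eq_self, add_comm]
            exact sub_add_cancel x i₀
          rw [hEC', hxx] at hxE
          exact hxE
        by_contra hne
        apply hS P hP R hR
        exact And.intro (fun h => hne (Subtype.ext h.symm)) (Or.inl ⟨A, hA, C, hCQ, hACsub⟩)
      rw [hsubA Q hQ htk', hsubA Q' hQ' (by rw [← hff]; exact htk')]
    · set t := f Q with ht
      have htlt : t < k := lt_of_le_of_ne hfm.2 htk'
      have ht1 : 1 ≤ t := hfm.1
      have hanch : ∀ R, R ∈ S → f R = t → ∃ C ∈ R.1.1,
          (∀ z : Fin n, z ∈ C ↔ ((i₀ + (((t-1 : ℕ)) : Fin n)) - z).val < C.card) := by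
        intro R hR hfR
        obtain ⟨C, hCQ, hiC⟩ := part_cover R.1.2 i₀
        obtain ⟨c, m, hm1, hm2, hCarc⟩ := R.2 C hCQ
        have memC := mem_arc_iff (show m ≤ n by omega) hCarc
        have hCcard : C.card = m := arc_card (show m ≤ n by omega) hCarc
        set x := i₀ + (((t-1 : ℕ)) : Fin n) with hx
        have hxC : x ∈ C := by
          have hpdx : pd R (t-1) := (key R hR (t-1) (by omega)).mpr (by omega)
          obtain ⟨E, hE, hiE, hxE⟩ := hpdx
          rwa [part_unique R.1.2 hE hCQ hiE hiC] at hxE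
        have hcast : (((t-1 : ℕ)) : Fin n) + 1 = ((t : ℕ) : Fin n) := by
          have h5 : t = (t-1) + 1 := by omega
          rw [h5]
          push_cast
          ring
        have hx1C : x + 1 ∉ C := by
          intro hmem
          have hpdt : pd R t := ⟨C, hCQ, hiC, by
            rw [← hcast, ← add_assoc]
            exact hmem⟩
          have := (key R hR t htlt).mp hpdt
          rw [hfR] at this
          omega
        exact ⟨C, hCQ, by
          rw [hCcard]
          exact end_anchor hn hm1 hm2 memC x hxC hx1C⟩
      obtain ⟨C, hCQ, hmemC⟩ := hanch Q hQ rfl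
      obtain ⟨C', hCQ', hmemC'⟩ := hanch Q' hQ' hff.symm
      by_contra hne
      rcases le_total C.card C'.card with hle | hle
      · apply hS Q hQ Q' hQ'
        exact And.intro (fun h => hne (Subtype.ext h))
          (Or.inl ⟨C, hCQ, C', hCQ', fun z hz =>
            (hmemC' z).mpr (lt_of_lt_of_le ((hmemC z).mp hz) hle)⟩)
      · apply hS Q' hQ' Q hQ
        exact And.intro (fun h => hne (Subtype.ext h).symm)
          (Or.inl ⟨C', hCQ', C, hCQ, fun z hz =>
            (hmemC z).mpr (lt_of_lt_of_le ((hmemC' z).mp hz) hle)⟩)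
  calc S.card ≤ (Finset.Icc 1 k).card := Finset.card_le_card_of_injOn f hmaps hinj
    _ = k := by rw [Nat.card_Icc]; omega
    _ = A.card := hAcard.symm


/-- If `S` is an independent set in `CG(n)`, then for every partition `{A,B} ∈ S`,
`|S| ≤ min(|A|,|B|)`; equivalently, `|S| ≤ |A|` for each part `A` of each member of `S`. -/
theorem indep_set_card_le (n : ℕ) (hn : 2 ≤ n) (S : Finset ↥(CGSet n))
    (hS : ∀ P ∈ S, ∀ Q ∈ S, ¬ (CG n).Adj P Q)
    (P : ↥(CGSet n)) (hP : P ∈ S) (A B : Finset (Fin n))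
    (hA : A ∈ P.1.1) (hB : B ∈ P.1.1) (hAB : A ≠ B) :
    S.card ≤ min A.card B.card :=
  le_min (aux_card_le n hn S hS P hP A B hA hB hAB)
    (aux_card_le n hn S hS P hP B A hB hA hAB.symm)
end

section
/- Let n ≥ 2 and define a weight function w on the vertices of the total cyclic interval graph CG(n) by w({A,B}) = 1/min(|A|,|B|). Then w is a fractional clique, i.e., for every independent set S of CG(n) one has ∑_{v ∈ S} w(v) ≤ 1, and the total weight of w over all vertices of CG(n) equals n·H_{⌊(n−1)/2⌋} + (1 − p(n)). -/
/-- `min(|A|,|B|)` for a partition `{A,B}`. -/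
def minPart {n : ℕ} (P : TKVert n) : ℕ :=
  P.1.inf' (Finset.card_pos.mp (by rw [P.2.1]; norm_num)) Finset.card


open Fin.NatCast Fin.CommRing

section Aux
set_option linter.unusedSectionVars false

lemma modn {n : ℕ} {a : ℕ} (h2 : a < 2*n) : a % n = if a < n then a else a - n := by
  split_ifs with h'
  · exact Nat.mod_eq_of_lt h'
  · rw [Nat.mod_eq_sub_mod (le_of_not_gt h'), Nat.mod_eq_of_lt (by omega)]

lemma sub_val {n : ℕ} (x y : Fin n) :
    ((x - y : Fin n) : ℕ) = if y.val ≤ x.val then x.val - y.val else x.val + n - y.val := by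
  have hx := x.isLt; have hy := y.isLt
  simp only [Fin.sub_def]
  rw [modn (show n - y.val + x.val < 2*n by omega)]
  split_ifs <;> omega

lemma add_val {n : ℕ} (x y : Fin n) :
    ((x + y : Fin n) : ℕ) = if x.val + y.val < n then x.val + y.val else x.val + y.val - n := by
  have hx := x.isLt; have hy := y.isLt
  simp only [Fin.add_def]
  rw [modn (show x.val + y.val < 2*n by omega)]

lemma cast_val {n : ℕ} [NeZero n] (k : ℕ) (h : k < n) : ((k : Fin n) : ℕ) = k := by
  rw [Fin.val_natCast, Nat.mod_eq_of_lt h]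

lemma one_val {n : ℕ} [NeZero n] (hn : 2 ≤ n) : ((1 : Fin n) : ℕ) = 1 := by
  rw [show (1 : Fin n) = ((1 : ℕ) : Fin n) from (Nat.cast_one).symm, cast_val 1 (by omega)]

def cintv {n : ℕ} (i : Fin n) (k : ℕ) : Finset (Fin n) :=
  Finset.univ.filter (fun x => ((x - i : Fin n) : ℕ) < k)

lemma mem_cintv {n : ℕ} {i : Fin n} {k : ℕ} {x : Fin n} :
    x ∈ cintv i k ↔ ((x - i : Fin n) : ℕ) < k := by simp [cintv]

lemma card_cintv {n : ℕ} [NeZero n] (i : Fin n) {k : ℕ} (h : k ≤ n) : (cintv i k).card = k := by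
  have := Finset.card_nbij (fun j => i + (j : Fin n)) (s := Finset.range k) (t := cintv i k)
    ?_ ?_ ?_
  · rw [← this, Finset.card_range]
  · intro a ha
    rw [Finset.mem_coe, Finset.mem_range] at ha
    show i + (a : Fin n) ∈ cintv i k; rw [mem_cintv]
    have : i + (a : Fin n) - i = (a : Fin n) := by ring
    rw [this, cast_val a (by omega)]; exact ha
  · intro a ha b hb hab
    simp only [Finset.mem_range, Finset.mem_coe] at *
    have : ((a : Fin n)) = (b : Fin n) := by
      have := add_right_injective i hab
      exact this
    have := congrArg Fin.val this
    rwa [cast_val a (by omega), cast_val b (by omega)] at this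
  · intro x hx
    rw [Finset.mem_coe, mem_cintv] at hx
    refine ⟨((x - i : Fin n) : ℕ), by simpa using hx, ?_⟩
    show i + (((x - i : Fin n) : ℕ) : Fin n) = x
    have : (((x - i : Fin n) : ℕ) : Fin n) = x - i := by
      apply Fin.ext; rw [cast_val _ (x - i).isLt]
    rw [this]; ring

variable {n : ℕ} [NeZero n]

lemma compl_cintv (i : Fin n) {k : ℕ} (hk : k < n) :
    (cintv i k)ᶜ = cintv (i + (k : Fin n)) (n - k) := by
  ext x
  simp only [Finset.mem_compl, mem_cintv]
  have h1 : (x - (i + (k : Fin n))) = (x - i) - (k : Fin n) := by ring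
  rw [h1, sub_val (x - i) ((k : Fin n)), cast_val k hk, sub_val x i]
  have hx := x.isLt; have hi := i.isLt
  split_ifs <;> omega

lemma mem_cintv_self (i : Fin n) {k : ℕ} (hk : 1 ≤ k) : i ∈ cintv i k := by
  rw [mem_cintv, sub_self]
  have : ((0 : Fin n) : ℕ) = 0 := rfl
  rw [this]; omega

lemma cintv_start_unique {i i' : Fin n} {k k' : ℕ} (hk : 1 ≤ k) (hk2 : k ≤ n - 1)
    (hk' : 1 ≤ k') (hk2' : k' ≤ n - 1) (h : cintv i k = cintv i' k') : i = i' ∧ k = k' := by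
  have hn : 2 ≤ n := by have := i.pos; omega
  have h1 : i' ∈ cintv i k := by rw [h]; exact mem_cintv_self _ hk'
  have h2 : i' - 1 ∉ cintv i' k' := by
    rw [mem_cintv]
    have e : i' - 1 - i' = (0 : Fin n) - 1 := by ring
    rw [e, sub_val (0 : Fin n) 1, one_val hn]
    have : ((0 : Fin n) : ℕ) = 0 := rfl
    rw [this]
    split_ifs <;> omega
  rw [← h] at h2
  rw [mem_cintv] at h1 h2
  have e : i' - 1 - i = (i' - i) - 1 := by ring
  rw [e, sub_val (i' - i) 1, one_val hn] at h2
  have hv : ((i' - i : Fin n) : ℕ) = 0 := by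
    have := (i' - i).isLt
    split_ifs at h2 <;> omega
  have hii : i = i' := by
    have h3 : i' - i = 0 := Fin.ext (by simp [hv])
    exact (sub_eq_zero.mp h3).symm
  refine ⟨hii, ?_⟩
  rw [hii] at h
  have e1 := card_cintv i' (show k ≤ n by omega)
  rw [h, card_cintv i' (show k' ≤ n by omega)] at e1
  omega

lemma isCyclicInterval_cintv (i : Fin n) {k : ℕ} (hk : 1 ≤ k) (hk2 : k ≤ n - 1) :
    IsCyclicInterval (cintv i k) := by
  have hn : 2 ≤ n := by have := i.pos; omega
  refine ⟨i.val, k, hk, hk2, ?_⟩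
  ext x
  simp only [cintv, Finset.coe_filter, Finset.mem_univ, true_and, Set.mem_setOf_eq]
  have hx := x.isLt
  have hi := i.isLt
  rw [sub_val]
  constructor
  · intro hlt
    split_ifs at hlt with hc
    · exact ⟨x.val - i.val, hlt, by rw [modn (by omega)]; split_ifs <;> omega⟩
    · exact ⟨x.val + n - i.val, hlt, by rw [modn (by omega)]; split_ifs <;> omega⟩
  · rintro ⟨j, hj, hxj⟩
    rw [modn (by omega)] at hxj
    split_ifs at hxj <;> split_ifs <;> omega

lemma exists_cintv_of_isCyclicInterval {A : Finset (Fin n)} (h : IsCyclicInterval A) :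
    ∃ (i : Fin n) (k : ℕ), 1 ≤ k ∧ k ≤ n - 1 ∧ A = cintv i k := by
  obtain ⟨i, k, hk, hk2, hA⟩ := h
  have hn0 : 0 < n := Nat.pos_of_ne_zero (NeZero.ne n)
  have hn : 2 ≤ n := by omega
  refine ⟨⟨i % n, Nat.mod_lt _ (by omega)⟩, k, hk, hk2, ?_⟩
  have hSA := Set.ext_iff.mp hA
  ext x
  have hx := x.isLt
  have hmem := hSA x
  simp only [Finset.mem_coe, Set.mem_setOf_eq] at hmem
  rw [show (x ∈ A) = (x ∈ (A : Set (Fin n))) from rfl] at hmem ⊢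
  rw [hmem, mem_cintv, sub_val]
  simp only
  have him : i % n < n := Nat.mod_lt _ (by omega)
  constructor
  · rintro ⟨j, hj, hxj⟩
    rw [Nat.add_mod, Nat.mod_eq_of_lt (show j < n by omega)] at hxj
    rw [modn (show i % n + j < 2*n by omega)] at hxj
    split_ifs at hxj <;> split_ifs <;> omega
  · intro hlt
    split_ifs at hlt with hc
    · refine ⟨x.val - i % n, hlt, ?_⟩
      rw [Nat.add_mod, Nat.mod_eq_of_lt (show x.val - i % n < n by omega),
        modn (show i % n + (x.val - i % n) < 2*n by omega)]
      split_ifs <;> omega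
    · refine ⟨x.val + n - i % n, hlt, ?_⟩
      rw [Nat.add_mod, Nat.mod_eq_of_lt (show x.val + n - i % n < n by omega),
        modn (show i % n + (x.val + n - i % n) < 2*n by omega)]
      split_ifs <;> omega

end Aux

variable {n : ℕ} [NeZero n]

def vparts (i : Fin n) (k : ℕ) : Finset (Finset (Fin n)) :=
  {cintv i k, cintv (i + (k : Fin n)) (n - k)}

lemma vparts_def (i : Fin n) (k : ℕ) :
    vparts i k = {cintv i k, cintv (i + (k : Fin n)) (n - k)} := rfl

lemma two_le_of_bounds {k : ℕ} (hk : 1 ≤ k) (hk2 : k ≤ n - 1) : 2 ≤ n := by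
  have : 0 < n := Nat.pos_of_ne_zero (NeZero.ne n); omega

lemma cintv_ne_compl {i : Fin n} {k : ℕ} (hk : 1 ≤ k) (hk2 : k ≤ n - 1) :
    cintv i k ≠ cintv (i + (k : Fin n)) (n - k) := by
  have hn := two_le_of_bounds (n := n) hk hk2
  intro h
  have h1 := mem_cintv_self i hk
  have h2 := h1
  rw [h, ← compl_cintv i (show k < n by omega), Finset.mem_compl] at h2
  exact h2 h1

lemma tkpart_vparts (i : Fin n) {k : ℕ} (hk : 1 ≤ k) (hk2 : k ≤ n - 1) :
    TKPart n (vparts i k) := by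
  have hn := two_le_of_bounds (n := n) hk hk2
  have hco := compl_cintv i (show k < n by omega)
  refine ⟨?_, ?_, ?_, ?_⟩
  · rw [vparts_def, Finset.card_insert_of_notMem (by simp [cintv_ne_compl hk hk2]),
      Finset.card_singleton]
  · intro A hA
    rw [vparts_def, Finset.mem_insert, Finset.mem_singleton] at hA
    rcases hA with rfl | rfl
    · rw [← Finset.card_pos, card_cintv i (by omega)]; omega
    · rw [← Finset.card_pos, card_cintv _ (by omega)]; omega
  · intro A hA B hB hAB
    rw [vparts_def, Finset.mem_insert, Finset.mem_singleton] at hA hB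
    rcases hA with rfl | rfl <;> rcases hB with rfl | rfl
    · exact absurd rfl hAB
    · rw [← hco]; exact disjoint_compl_right
    · rw [← hco]; exact disjoint_compl_left
    · exact absurd rfl hAB
  · rw [vparts_def, Finset.sup_insert, Finset.sup_singleton, id_eq, id_eq, ← hco,
      Finset.sup_eq_union, Finset.union_compl]

lemma cgvert_vparts (i : Fin n) {k : ℕ} (hk : 1 ≤ k) (hk2 : k ≤ n - 1) :
    (⟨vparts i k, tkpart_vparts i hk hk2⟩ : TKVert n) ∈ CGSet n := by
  intro A hA
  have hA' : A ∈ vparts i k := hA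
  rw [vparts_def, Finset.mem_insert, Finset.mem_singleton] at hA'
  rcases hA' with rfl | rfl
  · exact isCyclicInterval_cintv i hk hk2
  · exact isCyclicInterval_cintv _ (by omega) (by omega)

lemma vparts_swap (i : Fin n) {k : ℕ} (hk : 1 ≤ k) (hk2 : k ≤ n - 1) :
    vparts (i + (k : Fin n)) (n - k) = vparts i k := by
  have hn := two_le_of_bounds (n := n) hk hk2
  have e1 : (i + (k : Fin n)) + ((n - k : ℕ) : Fin n) = i := by
    rw [add_assoc, ← Nat.cast_add, show k + (n - k) = n by omega, Fin.natCast_self, add_zero]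
  have e2 : n - (n - k) = k := by omega
  rw [vparts_def, vparts_def, e1, e2, Finset.pair_comm]

lemma rep_exists (P : TKVert n) (hP : P ∈ CGSet n) :
    ∃ (i : Fin n) (k : ℕ), 1 ≤ k ∧ k ≤ n - 1 ∧ P.1 = vparts i k := by
  obtain ⟨hcard, hne, hdisj, hsup⟩ := P.2
  obtain ⟨A, B, hAB, hPAB⟩ := Finset.card_eq_two.mp hcard
  have hA : IsCyclicInterval A := hP A (by rw [hPAB]; simp)
  obtain ⟨i, k, hk, hk2, hAe⟩ := exists_cintv_of_isCyclicInterval hA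
  have hn := two_le_of_bounds (n := n) hk hk2
  have hsup' : A ∪ B = Finset.univ := by
    rw [hPAB] at hsup
    simpa [Finset.sup_insert, Finset.sup_singleton, Finset.sup_eq_union] using hsup
  have hdis : Disjoint A B := hdisj A (by rw [hPAB]; simp) B (by rw [hPAB]; simp) hAB
  have hBc : B = Aᶜ := by
    ext x
    rw [Finset.mem_compl]
    constructor
    · intro hx hxA
      exact (Finset.disjoint_left.mp hdis) hxA hx
    · intro hx
      have : x ∈ A ∪ B := by rw [hsup']; exact Finset.mem_univ x
      rw [Finset.mem_union] at this
      tauto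
  refine ⟨i, k, hk, hk2, ?_⟩
  rw [hPAB, hBc, hAe, compl_cintv i (show k < n by omega), vparts]

lemma rep_exists_mem (P : TKVert n) (hP : P ∈ CGSet n) (x : Fin n) :
    ∃ (i : Fin n) (k : ℕ), 1 ≤ k ∧ k ≤ n - 1 ∧ ((x - i : Fin n) : ℕ) < k ∧
      P.1 = vparts i k := by
  obtain ⟨i, k, hk, hk2, hPe⟩ := rep_exists P hP
  have hn := two_le_of_bounds (n := n) hk hk2
  by_cases hx : x ∈ cintv i k
  · exact ⟨i, k, hk, hk2, mem_cintv.mp hx, hPe⟩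
  · have hx' : x ∈ cintv (i + (k : Fin n)) (n - k) := by
      rw [← compl_cintv i (show k < n by omega), Finset.mem_compl]; exact hx
    exact ⟨i + (k : Fin n), n - k, by omega, by omega, mem_cintv.mp hx',
      by rw [hPe, vparts_swap i hk hk2]⟩

lemma rep_exists_min (P : TKVert n) (hP : P ∈ CGSet n) :
    ∃ (i : Fin n) (k : ℕ), 1 ≤ k ∧ k ≤ n - k ∧ k ≤ n - 1 ∧ P.1 = vparts i k := by
  obtain ⟨i, k, hk, hk2, hPe⟩ := rep_exists P hP
  have hn := two_le_of_bounds (n := n) hk hk2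
  by_cases hmin : k ≤ n - k
  · exact ⟨i, k, hk, hmin, hk2, hPe⟩
  · refine ⟨i + (k : Fin n), n - k, by omega, by omega, by omega,
      by rw [hPe, vparts_swap i hk hk2]⟩

lemma minPart_eq (P : TKVert n) (i : Fin n) {k : ℕ} (hk : 1 ≤ k) (hk2 : k ≤ n - 1)
    (h : P.1 = vparts i k) : minPart P = min k (n - k) := by
  have hn := two_le_of_bounds (n := n) hk hk2
  unfold minPart
  have key : ∀ (s : Finset (Finset (Fin n))) (H : s.Nonempty), s = vparts i k →
      s.inf' H Finset.card = min k (n - k) := by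
    rintro s H rfl
    apply le_antisymm
    · apply le_min
      · exact (Finset.inf'_le _ (by rw [vparts_def]; simp)).trans
          (le_of_eq (card_cintv i (by omega)))
      · refine (Finset.inf'_le _ (show cintv (i + (k : Fin n)) (n - k) ∈ vparts i k by
          rw [vparts_def]; simp)).trans (le_of_eq (card_cintv _ (by omega)))
    · apply Finset.le_inf'
      intro b hb
      rw [vparts_def, Finset.mem_insert, Finset.mem_singleton] at hb
      rcases hb with rfl | rfl
      · rw [card_cintv i (by omega)]; omega
      · rw [card_cintv _ (by omega)]; omega
  exact key P.1 _ h

lemma rep_unique {i i' : Fin n} {k k' : ℕ} (hk : 1 ≤ k) (hk2 : k ≤ n - 1)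
    (hk' : 1 ≤ k') (hk2' : k' ≤ n - 1) {x : Fin n}
    (hx : x ∈ cintv i k) (hx' : x ∈ cintv i' k')
    (h : vparts i k = vparts i' k') : i = i' ∧ k = k' := by
  have hn := two_le_of_bounds (n := n) hk hk2
  have hm : cintv i k ∈ vparts i' k' := by rw [← h, vparts]; simp
  rw [vparts_def, Finset.mem_insert, Finset.mem_singleton] at hm
  rcases hm with he | he
  · exact cintv_start_unique hk hk2 hk' hk2' he
  · exfalso
    rw [he, ← compl_cintv i' (show k' < n by omega), Finset.mem_compl] at hx
    exact hx hx'

variable {n : ℕ} [NeZero n]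

lemma cintv_subset_of_shared_end {i i' : Fin n} {k k' : ℕ} (hk : k < n) (hk' : k' < n)
    (hkk : k ≤ k') (hend : i + (k : Fin n) = i' + (k' : Fin n)) :
    cintv i k ⊆ cintv i' k' := by
  intro x hx
  rw [mem_cintv] at hx ⊢
  have e1 : x - i = (x - (i + (k : Fin n))) + (k : Fin n) := by ring
  have e2 : x - i' = (x - (i + (k : Fin n))) + (k' : Fin n) := by rw [hend]; ring
  rw [e1, add_val, cast_val k hk] at hx
  rw [e2, add_val, cast_val k' hk']
  have hu := (x - (i + (k : Fin n))).isLt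
  split_ifs at hx ⊢ <;> omega

lemma end_cut {i' : Fin n} {k' : ℕ} (hk' : 1 ≤ k') (hk2' : k' ≤ n - 1) {x : Fin n}
    (h1 : x ∈ cintv i' k') (h2 : x + 1 ∉ cintv i' k') : x + 1 = i' + (k' : Fin n) := by
  have hn := two_le_of_bounds (n := n) hk' hk2'
  rw [mem_cintv] at h1 h2
  have e : x + 1 - i' = (x - i') + 1 := by ring
  rw [e, add_val, one_val hn] at h2
  have hv := (x - i').isLt
  split_ifs at h2 with hc
  · have hveq : ((x - i' : Fin n) : ℕ) = k' - 1 := by omega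
    have hsub : x - i' = ((k' - 1 : ℕ) : Fin n) :=
      Fin.ext (by rw [cast_val (k' - 1) (by omega)]; exact hveq)
    have hcast : ((k' - 1 : ℕ) : Fin n) + 1 = ((k' : ℕ) : Fin n) := by
      rw [show (1 : Fin n) = ((1 : ℕ) : Fin n) from (Nat.cast_one).symm, ← Nat.cast_add]
      congr 1; omega
    have hx : x = i' + ((k' - 1 : ℕ) : Fin n) := by rw [← hsub]; ring
    rw [hx, add_assoc, hcast]
  · exfalso; omega

lemma crossing_aux {i i' : Fin n} {k k' s : ℕ}
    (hk' : 1 ≤ k') (hk2' : k' ≤ n - 1) (hs : 1 ≤ s) (hsk : s ≤ k - 1)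
    (hkn : k ≤ n - 1)
    (hi' : i' = i + (s : Fin n)) (hd : ((i - i' : Fin n) : ℕ) < k') :
    cintv (i' + (k' : Fin n)) (n - k') ⊆ cintv i k := by
  have hn := two_le_of_bounds (n := n) hk' hk2'
  have hsn : s < n := by omega
  have hd' : n - s < k' := by
    have e2 : i - i' = (0 : Fin n) - (s : Fin n) := by rw [hi']; ring
    rw [e2, sub_val, cast_val s hsn] at hd
    have h0 : ((0 : Fin n) : ℕ) = 0 := rfl
    rw [h0] at hd
    split_ifs at hd <;> omega
  intro x hx
  rw [mem_cintv] at hx ⊢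
  have e : x - (i' + (k' : Fin n)) = ((x - i) - (s : Fin n)) - (k' : Fin n) := by
    rw [hi']; ring
  rw [e, sub_val ((x - i) - (s : Fin n)) _, cast_val k' (by omega),
    sub_val (x - i) _, cast_val s hsn] at hx
  have hw := (x - i).isLt
  split_ifs at hx <;> omega

lemma dc_range {U : Finset ℕ} (h : ∀ a ∈ U, ∀ b, b ≤ a → b ∈ U) :
    U = Finset.range U.card := by
  ext m
  simp only [Finset.mem_range]
  constructor
  · intro hm
    have hsub : Finset.range (m + 1) ⊆ U := fun b hb => h m hm b (by
      simp only [Finset.mem_range] at hb; omega)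
    have := Finset.card_le_card hsub
    simp only [Finset.card_range] at this; omega
  · intro hm
    by_contra hmU
    have hsub : U ⊆ Finset.range m := fun a ha => by
      simp only [Finset.mem_range]
      by_contra ham
      exact hmU (h a ha m (by omega))
    have := Finset.card_le_card hsub
    simp only [Finset.card_range] at this; omega

lemma adj_of_nested {P Q : ↥(CGSet n)} (hPQ : P ≠ Q) {A C : Finset (Fin n)}
    (hA : A ∈ P.1.1) (hC : C ∈ Q.1.1) (h : A ⊆ C) : (CG n).Adj P Q := by
  have hne : P.1 ≠ Q.1 := fun he => hPQ (Subtype.ext he)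
  show (KG n).Adj P.1 Q.1
  exact ⟨hne, Or.inl ⟨A, hA, C, hC, h⟩⟩

variable {n : ℕ} [NeZero n]

set_option maxHeartbeats 1000000 in
lemma indep_card_le (S : Finset ↥(CGSet n))
    (hind : ∀ P ∈ S, ∀ Q ∈ S, ¬ (CG n).Adj P Q) {P : ↥(CGSet n)} (hP : P ∈ S) :
    S.card ≤ minPart P.1 := by
  classical
  obtain ⟨i, k, hk, hmin, hk2, hPe⟩ := rep_exists_min P.1 P.2
  have hn := two_le_of_bounds (n := n) hk hk2
  have hkn : k < n := by omega
  have hminP : minPart P.1 = k := by rw [minPart_eq P.1 i hk hk2 hPe]; omega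
  rw [hminP]
  have hrep : ∀ Q : ↥(CGSet n), ∃ p : Fin n × ℕ, 1 ≤ p.2 ∧ p.2 ≤ n - 1 ∧
      ((i - p.1 : Fin n) : ℕ) < p.2 ∧ Q.1.1 = vparts p.1 p.2 := fun Q => by
    obtain ⟨i', k', h1, h2, h3, h4⟩ := rep_exists_mem Q.1 Q.2 i
    exact ⟨(i', k'), h1, h2, h3, h4⟩
  set ri : ↥(CGSet n) → Fin n := fun Q => (hrep Q).choose.1 with hri
  set rk : ↥(CGSet n) → ℕ := fun Q => (hrep Q).choose.2 with hrk
  have hr1 : ∀ Q, 1 ≤ rk Q := fun Q => ((hrep Q).choose_spec).1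
  have hr2 : ∀ Q, rk Q ≤ n - 1 := fun Q => ((hrep Q).choose_spec).2.1
  have hr3 : ∀ Q, ((i - ri Q : Fin n) : ℕ) < rk Q := fun Q => ((hrep Q).choose_spec).2.2.1
  have hr4 : ∀ Q : ↥(CGSet n), Q.1.1 = vparts (ri Q) (rk Q) :=
    fun Q => ((hrep Q).choose_spec).2.2.2
  set C : ↥(CGSet n) → Finset (Fin n) := fun Q => cintv (ri Q) (rk Q) with hC
  set U : ↥(CGSet n) → Finset ℕ :=
    fun Q => (Finset.range k).filter (fun t => i + (t : Fin n) ∈ C Q) with hU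
  have hUmem : ∀ (Q : ↥(CGSet n)) (t : ℕ), t ∈ U Q ↔ (t < k ∧ i + (t : Fin n) ∈ C Q) := by
    intro Q t; simp [hU]
  have hCQ : ∀ Q : ↥(CGSet n), C Q ∈ Q.1.1 := fun Q => by
    rw [hr4 Q, vparts_def]; exact Finset.mem_insert_self _ _
  have hDQ : ∀ Q : ↥(CGSet n), cintv (ri Q + ((rk Q : ℕ) : Fin n)) (n - rk Q) ∈ Q.1.1 :=
    fun Q => by rw [hr4 Q, vparts_def]; simp
  have hAP : cintv i k ∈ P.1.1 := by rw [hPe, vparts_def]; exact Finset.mem_insert_self _ _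
  have hstep : ∀ Q ∈ S, ∀ a, a + 1 ∈ U Q → a ∈ U Q := by
    intro Q hQ a ha
    rw [hUmem Q] at ha ⊢
    obtain ⟨hak, hmem⟩ := ha
    refine ⟨by omega, ?_⟩
    by_contra hnot
    have hx1 : (i + ((a : ℕ) : Fin n)) + 1 = i + (((a + 1 : ℕ)) : Fin n) := by
      rw [add_assoc]; congr 1
      rw [show (1 : Fin n) = ((1 : ℕ) : Fin n) from (Nat.cast_one).symm, ← Nat.cast_add]
    have hmem' : (i + ((a : ℕ) : Fin n)) + 1 ∈ C Q := by rw [hx1]; exact hmem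
    have hv1 : ((((i + ((a : ℕ) : Fin n)) + 1) - ri Q : Fin n) : ℕ) < rk Q := mem_cintv.mp hmem'
    have hv0 : ¬ (((i + ((a : ℕ) : Fin n)) - ri Q : Fin n) : ℕ) < rk Q :=
      fun hcc => hnot (mem_cintv.mpr hcc)
    have heq : ri Q = i + (((a + 1 : ℕ)) : Fin n) := by
      have e : (i + ((a : ℕ) : Fin n)) - ri Q = (((i + ((a : ℕ) : Fin n)) + 1) - ri Q) - 1 := by
        ring
      rw [e, sub_val _ 1, one_val hn] at hv0
      have hlt := (((i + ((a : ℕ) : Fin n)) + 1) - ri Q).isLt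
      have hz : ((((i + ((a : ℕ) : Fin n)) + 1) - ri Q : Fin n) : ℕ) = 0 := by
        split_ifs at hv0 <;> omega
      have hzz : ((i + ((a : ℕ) : Fin n)) + 1) - ri Q = 0 := Fin.ext (by simpa using hz)
      have := sub_eq_zero.mp hzz
      rw [← this, hx1]
    have hQP : Q ≠ P := by
      intro hQP'
      subst hQP'
      have hiC : i ∈ C Q := mem_cintv.mpr (hr3 Q)
      have hCp : C Q ∈ vparts i k := by rw [← hPe]; exact hCQ Q
      rw [vparts_def, Finset.mem_insert, Finset.mem_singleton] at hCp
      rcases hCp with he | he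
      · have hstart := (cintv_start_unique (hr1 Q) (hr2 Q) hk hk2 he).1
        rw [heq] at hstart
        have hval := congrArg (fun z => ((z - i : Fin n) : ℕ)) hstart
        have e1 : i + (((a + 1 : ℕ)) : Fin n) - i = (((a + 1 : ℕ)) : Fin n) := by ring
        have e2 : i - i = (0 : Fin n) := by ring
        rw [e1, e2, cast_val (a + 1) (by omega)] at hval
        have h0 : ((0 : Fin n) : ℕ) = 0 := rfl
        rw [h0] at hval
        omega
      · rw [he, ← compl_cintv i hkn, Finset.mem_compl] at hiC
        exact hiC (mem_cintv_self i hk)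
    have hsub := crossing_aux (hr1 Q) (hr2 Q) (show 1 ≤ a + 1 by omega)
      (show a + 1 ≤ k - 1 by omega) hk2 heq (hr3 Q)
    exact hind Q hQ P hP (adj_of_nested hQP (hDQ Q) hAP hsub)
  have hdown : ∀ Q ∈ S, ∀ a ∈ U Q, ∀ b, b ≤ a → b ∈ U Q := by
    intro Q hQ a ha b hb
    have key : ∀ d a, a ∈ U Q → a - d ∈ U Q := by
      intro d
      induction d with
      | zero => intro a ha; simpa using ha
      | succ d ih =>
        intro a ha
        have h1 := ih a ha
        rcases Nat.eq_zero_or_pos (a - d) with h0 | h0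
        · rw [show a - (d + 1) = a - d by omega]; exact h1
        · have h2 := hstep Q hQ (a - d - 1)
            (by rw [show a - d - 1 + 1 = a - d by omega]; exact h1)
          rw [show a - (d + 1) = a - d - 1 by omega]; exact h2
    have := key (a - b) a ha
    rwa [show a - (a - b) = b by omega] at this
  have hUrange : ∀ Q ∈ S, U Q = Finset.range (U Q).card :=
    fun Q hQ => dc_range (fun a ha b hb => hdown Q hQ a ha b hb)
  have hj1 : ∀ Q : ↥(CGSet n), 1 ≤ (U Q).card := by
    intro Q
    have h0 : 0 ∈ U Q := by
      rw [hUmem Q]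
      refine ⟨by omega, ?_⟩
      have e : i + ((0 : ℕ) : Fin n) = i := by simp
      rw [e]; exact mem_cintv.mpr (hr3 Q)
    have := Finset.card_pos.mpr ⟨0, h0⟩
    omega
  have hjk : ∀ Q : ↥(CGSet n), (U Q).card ≤ k := by
    intro Q
    have hsub : U Q ⊆ Finset.range k := fun t ht =>
      Finset.mem_range.mpr ((hUmem Q t).mp ht).1
    have := Finset.card_le_card hsub
    simpa using this
  have hjlt : ∀ Q ∈ S, Q ≠ P → (U Q).card < k := by
    intro Q hQ hQP
    rcases lt_or_eq_of_le (hjk Q) with h | h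
    · exact h
    exfalso
    have hUall : U Q = Finset.range k := by rw [hUrange Q hQ, h]
    have hsub : cintv i k ⊆ C Q := by
      intro x hx
      rw [mem_cintv] at hx
      have hxe : x = i + (((x - i : Fin n) : ℕ) : Fin n) := by
        have e : ((((x - i : Fin n) : ℕ)) : Fin n) = x - i :=
          Fin.ext (by rw [cast_val _ (x - i).isLt])
        rw [e]; ring
      have hmm : ((x - i : Fin n) : ℕ) ∈ U Q := by rw [hUall]; exact Finset.mem_range.mpr hx
      rw [hUmem Q] at hmm
      rw [hxe]; exact hmm.2
    exact hind P hP Q hQ (adj_of_nested (Ne.symm hQP) hAP (hCQ Q) hsub)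
  have hcut : ∀ Q ∈ S, Q ≠ P →
      ri Q + ((rk Q : ℕ) : Fin n) = i + (((U Q).card : ℕ) : Fin n) := by
    intro Q hQ hQP
    have hjQ := hjlt Q hQ hQP
    have hj1Q := hj1 Q
    have hmem1 : (U Q).card - 1 ∈ U Q := by
      have hm : (U Q).card - 1 ∈ Finset.range (U Q).card := Finset.mem_range.mpr (by omega)
      rwa [← hUrange Q hQ] at hm
    have hmem2 : (U Q).card ∉ U Q := by
      have hm : (U Q).card ∉ Finset.range (U Q).card := by simp
      rwa [← hUrange Q hQ] at hm
    have hmem1' : i + ((((U Q).card - 1 : ℕ)) : Fin n) ∈ C Q :=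
      ((hUmem Q _).mp hmem1).2
    have hmem2' : i + (((U Q).card : ℕ) : Fin n) ∉ C Q := by
      intro hmm
      exact hmem2 ((hUmem Q _).mpr ⟨hjQ, hmm⟩)
    have hx1 : (i + ((((U Q).card - 1 : ℕ)) : Fin n)) + 1 = i + (((U Q).card : ℕ) : Fin n) := by
      rw [add_assoc]; congr 1
      rw [show (1 : Fin n) = ((1 : ℕ) : Fin n) from (Nat.cast_one).symm, ← Nat.cast_add]
      congr 1; omega
    have hec := end_cut (hr1 Q) (hr2 Q) hmem1' (by rw [hx1]; exact hmem2')
    rw [hx1] at hec; exact hec.symm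
  have hcard : (S.erase P).card ≤ (Finset.Icc 1 (k - 1)).card := by
    apply Finset.card_le_card_of_injOn (fun Q => (U Q).card)
    · intro Q hQ
      rw [Finset.mem_coe, Finset.mem_erase] at hQ
      show (U Q).card ∈ Finset.Icc 1 (k - 1); rw [Finset.mem_Icc]
      exact ⟨hj1 Q, by have := hjlt Q hQ.2 hQ.1; omega⟩
    · intro Q hQ Q' hQ' hjj
      rw [Finset.mem_coe, Finset.mem_erase] at hQ hQ'
      by_contra hne
      have hjj' : (U Q).card = (U Q').card := hjj
      have hc1 := hcut Q hQ.2 hQ.1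
      have hc2 := hcut Q' hQ'.2 hQ'.1
      rw [hjj'] at hc1
      have hcc : ri Q + ((rk Q : ℕ) : Fin n) = ri Q' + ((rk Q' : ℕ) : Fin n) :=
        hc1.trans hc2.symm
      rcases le_total (rk Q) (rk Q') with hle | hle
      · have hsub := cintv_subset_of_shared_end
          (show rk Q < n by have := hr2 Q; omega)
          (show rk Q' < n by have := hr2 Q'; omega) hle hcc
        exact hind Q hQ.2 Q' hQ'.2 (adj_of_nested hne (hCQ Q) (hCQ Q') hsub)
      · have hsub := cintv_subset_of_shared_end
          (show rk Q' < n by have := hr2 Q'; omega)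
          (show rk Q < n by have := hr2 Q; omega) hle hcc.symm
        exact hind Q' hQ'.2 Q hQ.2 (adj_of_nested (Ne.symm hne) (hCQ Q') (hCQ Q) hsub)
  have hce := Finset.card_erase_of_mem hP
  rw [Nat.card_Icc] at hcard
  omega

variable {n : ℕ} [NeZero n]

lemma total_sum (hn : 2 ≤ n) [Fintype ↥(CGSet n)] :
    ∑ P : ↥(CGSet n), (1 : ℝ) / (minPart P.1 : ℝ)
      = ∑ k ∈ Finset.Icc 1 (n - 1), (k : ℝ) * ((1 : ℝ) / ((min k (n - k) : ℕ) : ℝ)) := by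
  classical
  have hrep0 : ∀ P : ↥(CGSet n), ∃ p : Fin n × ℕ, 1 ≤ p.2 ∧ p.2 ≤ n - 1 ∧
      (((0 : Fin n) - p.1 : Fin n) : ℕ) < p.2 ∧ P.1.1 = vparts p.1 p.2 := fun P => by
    obtain ⟨i', k', h1, h2, h3, h4⟩ := rep_exists_mem P.1 P.2 0
    exact ⟨(i', k'), h1, h2, h3, h4⟩
  set D : Finset (Fin n × ℕ) :=
    ((Finset.univ : Finset (Fin n)) ×ˢ Finset.Icc 1 (n - 1)).filter
      (fun p => (((0 : Fin n) - p.1 : Fin n) : ℕ) < p.2) with hD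
  have hmemD : ∀ p : Fin n × ℕ,
      p ∈ D ↔ (1 ≤ p.2 ∧ p.2 ≤ n - 1 ∧ (((0 : Fin n) - p.1 : Fin n) : ℕ) < p.2) := by
    intro p
    simp only [hD, Finset.mem_filter, Finset.mem_product, Finset.mem_univ, true_and,
      Finset.mem_Icc]
    tauto
  have step1 : ∑ P : ↥(CGSet n), (1 : ℝ) / (minPart P.1 : ℝ)
      = ∑ p ∈ D, (1 : ℝ) / ((min p.2 (n - p.2) : ℕ) : ℝ) := by
    refine Finset.sum_bij' (fun P _ => (hrep0 P).choose)
      (fun p hp => (⟨⟨vparts p.1 p.2,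
          tkpart_vparts p.1 ((hmemD p).mp hp).1 ((hmemD p).mp hp).2.1⟩,
        cgvert_vparts p.1 ((hmemD p).mp hp).1 ((hmemD p).mp hp).2.1⟩ : ↥(CGSet n)))
      ?_ ?_ ?_ ?_ ?_
    · intro P _
      rw [hmemD]
      obtain ⟨h1, h2, h3, _⟩ := (hrep0 P).choose_spec
      exact ⟨h1, h2, h3⟩
    · intro p hp
      exact Finset.mem_univ _
    · intro P _
      obtain ⟨h1, h2, h3, h4⟩ := (hrep0 P).choose_spec
      exact Subtype.ext (Subtype.ext h4.symm)
    · intro p hp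
      obtain ⟨h1, h2, h3, h4⟩ := (hrep0 ⟨⟨vparts p.1 p.2,
        tkpart_vparts p.1 ((hmemD p).mp hp).1 ((hmemD p).mp hp).2.1⟩,
        cgvert_vparts p.1 ((hmemD p).mp hp).1 ((hmemD p).mp hp).2.1⟩).choose_spec
      obtain ⟨hp1, hp2, hp3⟩ := (hmemD p).mp hp
      have hx : (0 : Fin n) ∈ cintv (hrep0 _).choose.1 (hrep0 _).choose.2 :=
        mem_cintv.mpr h3
      have hx' : (0 : Fin n) ∈ cintv p.1 p.2 := mem_cintv.mpr hp3
      have := rep_unique h1 h2 hp1 hp2 hx hx' (h4.symm)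
      exact Prod.ext this.1 this.2
    · intro P _
      obtain ⟨h1, h2, h3, h4⟩ := (hrep0 P).choose_spec
      rw [minPart_eq P.1 _ h1 h2 h4]
  rw [step1]
  rw [Finset.sum_finset_product_right D (Finset.Icc 1 (n - 1))
    (fun k => Finset.univ.filter (fun i : Fin n => (((0 : Fin n) - i : Fin n) : ℕ) < k))
    (by
      intro p
      rw [hmemD]
      simp only [Finset.mem_Icc, Finset.mem_filter, Finset.mem_univ, true_and]
      tauto)]
  apply Finset.sum_congr rfl
  intro k hk
  rw [Finset.mem_Icc] at hk
  have econst : forall a, a ∈ Finset.univ.filter (fun i : Fin n => (((0 : Fin n) - i : Fin n) : ℕ) < k) ->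
      (1 : ℝ) / ((min (a, k).2 (n - (a, k).2) : ℕ) : ℝ) = (1 : ℝ) / ((min k (n - k) : ℕ) : ℝ) :=
    fun a _ => rfl
  rw [Finset.sum_congr rfl econst, Finset.sum_const, nsmul_eq_mul]
  congr 1
  -- card of the fiber is k
  rw [show (Finset.univ.filter (fun i : Fin n => (((0 : Fin n) - i : Fin n) : ℕ) < k)).card
      = (cintv (0 : Fin n) k).card from ?_, card_cintv _ (by omega)]
  apply Finset.card_nbij (fun i => (0 : Fin n) - i)
  · intro i hi
    rw [Finset.mem_coe, Finset.mem_filter] at hi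
    show (0 : Fin n) - i ∈ cintv 0 k; rw [mem_cintv]
    have e : (0 : Fin n) - i - 0 = (0 : Fin n) - i := by ring
    rw [e]; exact hi.2
  · intro a _ b _ hab
    simp only at hab
    have : (0 : Fin n) - ((0 : Fin n) - a) = (0 : Fin n) - ((0 : Fin n) - b) := by rw [hab]
    simpa using this
  · intro x hx
    rw [Finset.mem_coe, mem_cintv] at hx
    refine ⟨(0 : Fin n) - x, ?_, by ring⟩
    rw [Finset.mem_coe, Finset.mem_filter]
    refine ⟨Finset.mem_univ _, ?_⟩
    have e : (0 : Fin n) - ((0 : Fin n) - x) = x := by ring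
    rw [e]
    have e2 : x - 0 = x := by ring
    rw [e2] at hx
    exact hx

lemma icc_sum_eval (n : ℕ) (hn : 2 ≤ n) :
    ∑ k ∈ Finset.Icc 1 (n - 1), (k : ℝ) * ((1 : ℝ) / ((min k (n - k) : ℕ) : ℝ))
      = (n : ℝ) * ((harmonic ((n - 1) / 2) : ℚ) : ℝ) + (1 - ((n % 2 : ℕ) : ℝ)) := by
  set m' := n / 2 with hm'
  set m := (n - 1) / 2 with hm
  have hsplit : Finset.Icc 1 (n - 1) = Finset.Icc 1 m' ∪ Finset.Icc (m' + 1) (n - 1) := by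
    ext x; simp only [Finset.mem_Icc, Finset.mem_union]; omega
  have hdisj : Disjoint (Finset.Icc 1 m') (Finset.Icc (m' + 1) (n - 1)) := by
    rw [Finset.disjoint_left]
    intro a ha hb
    rw [Finset.mem_Icc] at ha hb
    omega
  rw [hsplit, Finset.sum_union hdisj]
  have h1 : ∑ k ∈ Finset.Icc 1 m', (k : ℝ) * ((1 : ℝ) / ((min k (n - k) : ℕ) : ℝ))
      = (m' : ℝ) := by
    have e1 : ∀ k ∈ Finset.Icc 1 m', (k : ℝ) * ((1 : ℝ) / ((min k (n - k) : ℕ) : ℝ))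
        = (1 : ℝ) := by
      intro k hk
      rw [Finset.mem_Icc] at hk
      rw [min_eq_left (by omega)]
      have hk0 : ((k : ℕ) : ℝ) ≠ 0 := Nat.cast_ne_zero.mpr (by omega)
      field_simp
    rw [Finset.sum_congr rfl e1, Finset.sum_const, nsmul_eq_mul, mul_one]
    norm_cast
    rw [Nat.card_Icc]; omega
  have h2 : ∑ k ∈ Finset.Icc (m' + 1) (n - 1), (k : ℝ) * ((1 : ℝ) / ((min k (n - k) : ℕ) : ℝ))
      = ∑ j ∈ Finset.Icc 1 m, ((n : ℝ) / (j : ℝ) - 1) := by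
    refine Finset.sum_nbij' (fun k => n - k) (fun j => n - j) ?_ ?_ ?_ ?_ ?_
    · intro a ha; rw [Finset.mem_Icc] at ha; show n - a ∈ Finset.Icc 1 m
      rw [Finset.mem_Icc]; omega
    · intro a ha; rw [Finset.mem_Icc] at ha; show n - a ∈ Finset.Icc (m' + 1) (n - 1)
      rw [Finset.mem_Icc]; omega
    · intro a ha; rw [Finset.mem_Icc] at ha; show n - (n - a) = a; omega
    · intro a ha; rw [Finset.mem_Icc] at ha; show n - (n - a) = a; omega
    · intro k hk
      rw [Finset.mem_Icc] at hk
      show (k : ℝ) * ((1 : ℝ) / ((min k (n - k) : ℕ) : ℝ)) = (n : ℝ) / ((n - k : ℕ) : ℝ) - 1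
      rw [min_eq_right (by omega)]
      rw [Nat.cast_sub (show k ≤ n by omega)]
      have hklt : (k : ℝ) < (n : ℝ) := by exact_mod_cast (show k < n by omega)
      have hd : (n : ℝ) - (k : ℝ) ≠ 0 := sub_ne_zero.mpr (ne_of_gt hklt)
      field_simp
      ring
  have h3 : ∑ j ∈ Finset.Icc 1 m, ((n : ℝ) / (j : ℝ) - 1)
      = (n : ℝ) * (∑ j ∈ Finset.Icc 1 m, (1 : ℝ) / (j : ℝ)) - (m : ℝ) := by
    rw [Finset.sum_sub_distrib, Finset.sum_const, nsmul_eq_mul, mul_one, Finset.mul_sum]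
    congr 1
    · apply Finset.sum_congr rfl
      intro j _
      rw [mul_one_div]
    · congr 1
      norm_cast
      rw [Nat.card_Icc]; omega
  have h4 : ∑ j ∈ Finset.Icc 1 m, (1 : ℝ) / (j : ℝ) = ((harmonic m : ℚ) : ℝ) := by
    have e : ((harmonic m : ℚ) : ℝ) = ∑ i ∈ Finset.range m, (1 : ℝ) / ((i : ℝ) + 1) := by
      simp only [harmonic, Rat.cast_sum, Rat.cast_inv, Rat.cast_natCast, one_div]
      apply Finset.sum_congr rfl
      intro i _
      push_cast
      ring
    rw [e]
    refine Finset.sum_nbij' (fun j => j - 1) (fun i => i + 1) ?_ ?_ ?_ ?_ ?_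
    · intro a ha; rw [Finset.mem_Icc] at ha; show a - 1 ∈ Finset.range m
      rw [Finset.mem_range]; omega
    · intro a ha; rw [Finset.mem_range] at ha; show a + 1 ∈ Finset.Icc 1 m
      rw [Finset.mem_Icc]; omega
    · intro a ha; rw [Finset.mem_Icc] at ha; show a - 1 + 1 = a; omega
    · intro a ha; rw [Finset.mem_range] at ha; show a + 1 - 1 = a; omega
    · intro j hj
      rw [Finset.mem_Icc] at hj
      show (1 : ℝ) / (j : ℝ) = (1 : ℝ) / (((j - 1 : ℕ) : ℝ) + 1)
      have e2 : ((j - 1 : ℕ) : ℝ) = (j : ℝ) - 1 := by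
        rw [Nat.cast_sub (by omega)]; norm_num
      rw [e2]; ring_nf
  rw [h1, h2, h3, h4]
  have hcases : n % 2 = 0 ∨ n % 2 = 1 := by omega
  rcases hcases with h | h
  · have : m' = m + 1 := by omega
    rw [this, h]
    push_cast
    ring
  · have : m' = m := by omega
    rw [this, h]
    push_cast
    ring

/-- The weight `w({A,B}) = 1/min(|A|,|B|)` is a fractional clique of `CG(n)`:
every independent set has total weight at most 1, and the total weight over all
vertices is `n·H_{⌊(n-1)/2⌋} + (1 - p(n))`. -/
theorem fractional_clique_CG (n : ℕ) (hn : 2 ≤ n) :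
    (∀ S : Finset ↥(CGSet n), (∀ P ∈ S, ∀ Q ∈ S, ¬ (CG n).Adj P Q) →
        ∑ P ∈ S, (1 : ℝ) / (minPart P.1 : ℝ) ≤ 1) ∧
      ∑ᶠ P : ↥(CGSet n), (1 : ℝ) / (minPart P.1 : ℝ)
        = (n : ℝ) * ((harmonic ((n - 1) / 2) : ℚ) : ℝ) + (1 - ((n % 2 : ℕ) : ℝ)) := by
  haveI : NeZero n := ⟨by omega⟩
  constructor
  · intro S hind
    rcases Finset.eq_empty_or_nonempty S with rfl | hSne
    · simp
    · have hpos : 0 < S.card := Finset.card_pos.mpr hSne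
      have hle : ∀ P ∈ S, (1 : ℝ) / (minPart P.1 : ℝ) ≤ 1 / (S.card : ℝ) := by
        intro P hP
        have h1 := indep_card_le S hind hP
        have h2 : (0 : ℝ) < (S.card : ℝ) := by exact_mod_cast hpos
        exact one_div_le_one_div_of_le h2 (by exact_mod_cast h1)
      calc ∑ P ∈ S, (1 : ℝ) / (minPart P.1 : ℝ)
          ≤ ∑ _P ∈ S, (1 : ℝ) / (S.card : ℝ) := Finset.sum_le_sum hle
        _ = 1 := by
            rw [Finset.sum_const, nsmul_eq_mul]
            field_simp
  · haveI := Fintype.ofFinite ↥(CGSet n)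
    rw [finsum_eq_sum_of_fintype, total_sum hn, icc_sum_eval n hn]
end

section
/- For every integer n ≥ 2 there exists a fractional coloring of the total Kneser graph KG(n) of total weight n·H_{⌊(n−1)/2⌋} + (1 − p(n)): that is, a function μ assigning a nonnegative real number to each independent set of KG(n) such that for every vertex v one has ∑_{S : v ∈ S} μ(S) ≥ 1, and ∑_S μ(S) = n·H_{⌊(n−1)/2⌋} + (1 − p(n)). -/
instance instDecTKPart (n : ℕ) : DecidablePred (TKPart n) := fun P =>
  decidable_of_iff (P.card = 2 ∧ (∀ A ∈ P, A.Nonempty) ∧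
    (∀ A ∈ P, ∀ B ∈ P, A ≠ B → Disjoint A B) ∧ P.sup id = Finset.univ) Iff.rfl

lemma compl_of_partition {n : ℕ} {B C : Finset (Fin n)} (hd : Disjoint B C)
    (hu : B ∪ C = Finset.univ) : C = Bᶜ := by
  ext x
  simp only [Finset.mem_compl]
  constructor
  · intro hx hxB
    exact Finset.disjoint_left.mp hd hxB hx
  · intro hx
    have hxu := Finset.mem_univ x
    rw [← hu] at hxu
    rcases Finset.mem_union.mp hxu with h | h
    · exact absurd h hx
    · exact h

lemma tk_pair {n : ℕ} {P : Finset (Finset (Fin n))} (hP : TKPart n P)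
    {A : Finset (Fin n)} (hA : A ∈ P) : P = {A, Aᶜ} := by
  obtain ⟨B, C, hBC, rfl⟩ := Finset.card_eq_two.mp hP.1
  have hsup : B ∪ C = Finset.univ := by
    have h := hP.2.2.2
    simpa [Finset.sup_insert, Finset.sup_singleton] using h
  have hdisj : Disjoint B C := hP.2.2.1 B (by simp) C (by simp) hBC
  rcases Finset.mem_insert.mp hA with rfl | hA
  · rw [compl_of_partition hdisj hsup]
  · rw [Finset.mem_singleton] at hA
    subst hA
    rw [compl_of_partition hdisj.symm (by rw [Finset.union_comm]; exact hsup),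
      Finset.pair_comm]

lemma vert_eq {n : ℕ} {v w : TKVert n} {A : Finset (Fin n)}
    (hv : A ∈ v.1) (hw : A ∈ w.1) : v = w :=
  Subtype.ext ((tk_pair v.2 hv).trans (tk_pair w.2 hw).symm)

lemma compl_mem {n : ℕ} {v : TKVert n} {A : Finset (Fin n)} (hv : A ∈ v.1) :
    Aᶜ ∈ v.1 := by
  rw [tk_pair v.2 hv]; simp

lemma card_compl_part {n : ℕ} (A : Finset (Fin n)) : Aᶜ.card = n - A.card := by
  simp [Finset.card_compl]

/-- The independent set of partitions with a size-`k` part containing `i`. -/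
def SIK (n : ℕ) (i : Fin n) (k : ℕ) : Finset (TKVert n) :=
  Finset.univ.filter (fun v => ∃ A ∈ v.1, i ∈ A ∧ A.card = k)

/-- The independent set of balanced partitions. -/
def Tbal (n : ℕ) : Finset (TKVert n) :=
  Finset.univ.filter (fun v => ∀ A ∈ v.1, 2 * A.card = n)

lemma nest_aux {n : ℕ} {i : Fin n} {k : ℕ} (hk : 2 * k < n) {P Q : TKVert n}
    {A C : Finset (Fin n)} (hAP : A ∈ P.1) (hCQ : C ∈ Q.1) (hiA : i ∈ A) (hiC : i ∈ C)
    (hAk : A.card = k) (hCk : C.card = k) (hPQ : P ≠ Q) :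
    ¬ ∃ X ∈ P.1, ∃ Y ∈ Q.1, X ⊆ Y := by
  rintro ⟨X, hX, Y, hY, hXY⟩
  rw [tk_pair P.2 hAP] at hX
  rw [tk_pair Q.2 hCQ] at hY
  have hkn : k < n := by omega
  rcases Finset.mem_insert.mp hX with rfl | hX <;>
    rcases Finset.mem_insert.mp hY with rfl | hY
  · -- A ⊆ C
    have hAC : X = Y := Finset.eq_of_subset_of_card_le hXY (by rw [hAk, hCk])
    exact hPQ (vert_eq hAP (hAC ▸ hCQ))
  · -- A ⊆ Cᶜ
    rw [Finset.mem_singleton] at hY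
    subst hY
    exact (Finset.mem_compl.mp (hXY hiA)) hiC
  · -- Aᶜ ⊆ C
    rw [Finset.mem_singleton] at hX
    subst hX
    have h1 := Finset.card_le_card hXY
    rw [card_compl_part, hAk, hCk] at h1
    omega
  · -- Aᶜ ⊆ Cᶜ
    rw [Finset.mem_singleton] at hX hY
    subst hX; subst hY
    have hAC : Aᶜ = Cᶜ := Finset.eq_of_subset_of_card_le hXY
      (by rw [card_compl_part, card_compl_part, hAk, hCk])
    have hAC' : A = C := by
      have := congrArg (·ᶜ) hAC
      simpa using this
    exact hPQ (vert_eq hAP (hAC' ▸ hCQ))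

lemma SIK_indep {n : ℕ} {i : Fin n} {k : ℕ} (hk : 2 * k < n) {P Q : TKVert n}
    (hP : P ∈ SIK n i k) (hQ : Q ∈ SIK n i k) : ¬ (KG n).Adj P Q := by
  simp only [SIK, Finset.mem_filter] at hP hQ
  obtain ⟨-, A, hAP, hiA, hAk⟩ := hP
  obtain ⟨-, C, hCQ, hiC, hCk⟩ := hQ
  rintro ⟨hne, hnest | hnest⟩
  · exact nest_aux hk hAP hCQ hiA hiC hAk hCk hne hnest
  · exact nest_aux hk hCQ hAP hiC hiA hCk hAk (Ne.symm hne) hnest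

lemma Tbal_aux {n : ℕ} {P Q : TKVert n} (hP : P ∈ Tbal n) (hQ : Q ∈ Tbal n)
    (hPQ : P ≠ Q) : ¬ ∃ X ∈ P.1, ∃ Y ∈ Q.1, X ⊆ Y := by
  simp only [Tbal, Finset.mem_filter] at hP hQ
  rintro ⟨X, hX, Y, hY, hXY⟩
  have h1 := hP.2 X hX
  have h2 := hQ.2 Y hY
  have : X = Y := Finset.eq_of_subset_of_card_le hXY (by omega)
  exact hPQ (vert_eq hX (this ▸ hY))

lemma Tbal_indep {n : ℕ} {P Q : TKVert n} (hP : P ∈ Tbal n) (hQ : Q ∈ Tbal n) :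
    ¬ (KG n).Adj P Q := by
  rintro ⟨hne, hnest | hnest⟩
  · exact Tbal_aux hP hQ hne hnest
  · exact Tbal_aux hQ hP (Ne.symm hne) hnest

lemma cover_lemma (n : ℕ) (hn : 2 ≤ n) (v : TKVert n) :
    (1 : ℝ) ≤ (∑ i : Fin n, ∑ k ∈ Finset.Icc 1 ((n - 1) / 2),
        if v ∈ SIK n i k then ((k : ℝ))⁻¹ else 0) +
      (if n % 2 = 0 ∧ v ∈ Tbal n then 1 else 0) := by
  -- pick a part of size at most n/2
  have hvne : v.1.Nonempty := Finset.card_pos.mp (by rw [v.2.1]; omega)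
  obtain ⟨A₀, hA₀⟩ := hvne
  have hA₀n : A₀.card ≤ n := by
    simpa using Finset.card_le_univ A₀
  obtain ⟨A, hA, hAle⟩ : ∃ A ∈ v.1, 2 * A.card ≤ n := by
    by_cases h : 2 * A₀.card ≤ n
    · exact ⟨A₀, hA₀, h⟩
    · refine ⟨A₀ᶜ, compl_mem hA₀, ?_⟩
      rw [card_compl_part]
      omega
  have hc1 : 1 ≤ A.card := Finset.card_pos.mpr (v.2.2.1 A hA)
  have hcc : 1 ≤ n - A.card := by
    have := Finset.card_pos.mpr (v.2.2.1 Aᶜ (compl_mem hA))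
    rwa [card_compl_part] at this
  by_cases hbal : 2 * A.card = n
  · -- balanced partition
    have hmem : v ∈ Tbal n := by
      rw [Tbal, Finset.mem_filter]
      refine ⟨Finset.mem_univ _, fun B hB => ?_⟩
      rw [tk_pair v.2 hA] at hB
      rcases Finset.mem_insert.mp hB with rfl | hB
      · exact hbal
      · rw [Finset.mem_singleton] at hB
        subst hB
        rw [card_compl_part]
        omega
    have h2 : n % 2 = 0 := by omega
    rw [if_pos ⟨h2, hmem⟩]
    have hnn : (0 : ℝ) ≤ ∑ i : Fin n, ∑ k ∈ Finset.Icc 1 ((n - 1) / 2),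
        if v ∈ SIK n i k then ((k : ℝ))⁻¹ else 0 := by
      refine Finset.sum_nonneg fun i _ => Finset.sum_nonneg fun k _ => ?_
      split <;> positivity
    linarith
  · -- small part of size < n/2
    have hlt : 2 * A.card < n := lt_of_le_of_ne hAle hbal
    have hmK : A.card ∈ Finset.Icc 1 ((n - 1) / 2) := by
      rw [Finset.mem_Icc]
      omega
    have hSIK : ∀ i ∈ A, v ∈ SIK n i A.card := fun i hi =>
      Finset.mem_filter.mpr ⟨Finset.mem_univ _, A, hA, hi, rfl⟩
    have hcne : (A.card : ℝ) ≠ 0 := by positivity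
    have h1 : (1 : ℝ) = ∑ _i ∈ A, ((A.card : ℝ))⁻¹ := by
      rw [Finset.sum_const, nsmul_eq_mul]
      field_simp
    have h2 : ∑ _i ∈ A, ((A.card : ℝ))⁻¹ ≤
        ∑ i ∈ A, ∑ k ∈ Finset.Icc 1 ((n - 1) / 2),
          if v ∈ SIK n i k then ((k : ℝ))⁻¹ else 0 := by
      refine Finset.sum_le_sum fun i hi => ?_
      have := Finset.single_le_sum
        (f := fun k => if v ∈ SIK n i k then ((k : ℝ))⁻¹ else 0)
        (fun k _ => by split <;> positivity) hmK
      simpa [hSIK i hi] using this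
    have h3 : ∑ i ∈ A, ∑ k ∈ Finset.Icc 1 ((n - 1) / 2),
          (if v ∈ SIK n i k then ((k : ℝ))⁻¹ else 0) ≤
        ∑ i : Fin n, ∑ k ∈ Finset.Icc 1 ((n - 1) / 2),
          if v ∈ SIK n i k then ((k : ℝ))⁻¹ else 0 := by
      refine Finset.sum_le_sum_of_subset_of_nonneg (Finset.subset_univ A)
        fun i _ _ => Finset.sum_nonneg fun k _ => by split <;> positivity
    have h4 : (0 : ℝ) ≤ if n % 2 = 0 ∧ v ∈ Tbal n then 1 else 0 := by
      split <;> norm_num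
    linarith

lemma harmonic_icc (m : ℕ) :
    ∑ k ∈ Finset.Icc 1 m, ((k : ℝ))⁻¹ = ((harmonic m : ℚ) : ℝ) := by
  induction m with
  | zero => simp [harmonic]
  | succ m ih =>
    rw [Finset.sum_Icc_succ_top (by omega), ih, harmonic, harmonic,
      Finset.sum_range_succ]
    push_cast
    ring

set_option maxHeartbeats 1000000 in
/-- `KG(n)` has a fractional coloring of total weight `n·H_{⌊(n-1)/2⌋} + (1 - p(n))`:
a nonnegative weight on independent sets covering every vertex with total weight ≥ 1. -/
theorem fractional_coloring_KG (n : ℕ) (hn : 2 ≤ n) :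
    ∃ μ : Finset (TKVert n) → ℝ,
      (∀ S, 0 ≤ μ S) ∧
      (∀ S, μ S ≠ 0 → ∀ P ∈ S, ∀ Q ∈ S, ¬ (KG n).Adj P Q) ∧
      (∀ v : TKVert n, 1 ≤ ∑ᶠ S : Finset (TKVert n), if v ∈ S then μ S else 0) ∧
      ∑ᶠ S : Finset (TKVert n), μ S
        = (n : ℝ) * ((harmonic ((n - 1) / 2) : ℚ) : ℝ) + (1 - ((n % 2 : ℕ) : ℝ)) := by
  set m := (n - 1) / 2 with hm
  refine ⟨fun S =>
    (∑ i : Fin n, ∑ k ∈ Finset.Icc 1 m, if S = SIK n i k then ((k : ℝ))⁻¹ else 0) +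
      (if n % 2 = 0 ∧ S = Tbal n then 1 else 0), ?_, ?_, ?_, ?_⟩
  · -- nonnegativity
    intro S
    refine add_nonneg (Finset.sum_nonneg fun i _ => Finset.sum_nonneg fun k _ => ?_) ?_
    · split <;> positivity
    · split <;> norm_num
  · -- independence
    intro S hS P hP Q hQ
    simp only [] at hS
    by_cases h2 : n % 2 = 0 ∧ S = Tbal n
    · obtain ⟨-, rfl⟩ := h2
      exact Tbal_indep hP hQ
    · rw [if_neg h2, add_zero] at hS
      obtain ⟨i, -, hi⟩ := Finset.exists_ne_zero_of_sum_ne_zero hS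
      obtain ⟨k, hkm, hk⟩ := Finset.exists_ne_zero_of_sum_ne_zero hi
      have hSik : S = SIK n i k := by
        by_contra h
        rw [if_neg h] at hk
        exact hk rfl
      subst hSik
      rw [Finset.mem_Icc] at hkm
      have hkn : 2 * k < n := by omega
      exact SIK_indep hkn hP hQ
  · -- coverage
    intro v
    rw [finsum_eq_sum_of_fintype]
    have step : ∀ S : Finset (TKVert n), (if v ∈ S then
        ((∑ i : Fin n, ∑ k ∈ Finset.Icc 1 m, if S = SIK n i k then ((k : ℝ))⁻¹ else 0) +
          (if n % 2 = 0 ∧ S = Tbal n then 1 else 0)) else 0) =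
        (∑ i : Fin n, ∑ k ∈ Finset.Icc 1 m,
          if S = SIK n i k then (if v ∈ SIK n i k then ((k : ℝ))⁻¹ else 0) else 0) +
        (if S = Tbal n then (if n % 2 = 0 ∧ v ∈ Tbal n then 1 else 0) else 0) := by
      intro S
      by_cases hv : v ∈ S
      · rw [if_pos hv]
        refine congrArg₂ (· + ·) ?_ ?_
        · refine Finset.sum_congr rfl fun i _ => Finset.sum_congr rfl fun k _ => ?_
          by_cases hS : S = SIK n i k
          · subst hS
            rw [if_pos rfl, if_pos rfl, if_pos hv]
          · rw [if_neg hS, if_neg hS]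
        · by_cases hS : S = Tbal n
          · subst hS
            have hiff : (n % 2 = 0 ∧ Tbal n = Tbal n) ↔ (n % 2 = 0 ∧ v ∈ Tbal n) :=
              ⟨fun h => ⟨h.1, hv⟩, fun h => ⟨h.1, rfl⟩⟩
            rw [if_pos rfl]
            exact if_congr hiff rfl rfl
          · rw [if_neg hS, if_neg (fun h => hS h.2)]
      · rw [if_neg hv]
        symm
        rw [Finset.sum_eq_zero, zero_add]
        · by_cases hS : S = Tbal n
          · subst hS
            rw [if_pos rfl, if_neg (fun h => hv h.2)]
          · rw [if_neg hS]
        · intro i _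
          refine Finset.sum_eq_zero fun k _ => ?_
          by_cases hS : S = SIK n i k
          · subst hS
            rw [if_pos rfl, if_neg (fun h => hv h)]
          · rw [if_neg hS]
    have key : ∑ S : Finset (TKVert n), (if v ∈ S then
        ((∑ i : Fin n, ∑ k ∈ Finset.Icc 1 m, if S = SIK n i k then ((k : ℝ))⁻¹ else 0) +
          (if n % 2 = 0 ∧ S = Tbal n then 1 else 0)) else 0) =
        (∑ i : Fin n, ∑ k ∈ Finset.Icc 1 m,
          if v ∈ SIK n i k then ((k : ℝ))⁻¹ else 0) +
        (if n % 2 = 0 ∧ v ∈ Tbal n then 1 else 0) := by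
      rw [Finset.sum_congr rfl fun S _ => step S, Finset.sum_add_distrib]
      refine congrArg₂ (· + ·) ?_ ?_
      · rw [Finset.sum_comm]
        refine Finset.sum_congr rfl fun i _ => ?_
        rw [Finset.sum_comm]
        refine Finset.sum_congr rfl fun k _ => ?_
        rw [Finset.sum_ite_eq' Finset.univ (SIK n i k)
          (fun _ => if v ∈ SIK n i k then ((k : ℝ))⁻¹ else 0), if_pos (Finset.mem_univ _)]
      · rw [Finset.sum_ite_eq' Finset.univ (Tbal n)
          (fun _ => if n % 2 = 0 ∧ v ∈ Tbal n then 1 else 0), if_pos (Finset.mem_univ _)]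
    exact le_trans (cover_lemma n hn v) (le_of_eq key.symm)
  · -- total weight
    rw [finsum_eq_sum_of_fintype]
    have h1 : ∑ S : Finset (TKVert n),
        (∑ i : Fin n, ∑ k ∈ Finset.Icc 1 m, if S = SIK n i k then ((k : ℝ))⁻¹ else 0) =
        (n : ℝ) * ∑ k ∈ Finset.Icc 1 m, ((k : ℝ))⁻¹ := by
      have hinner : ∀ i : Fin n, ∑ S : Finset (TKVert n),
          (∑ k ∈ Finset.Icc 1 m, if S = SIK n i k then ((k : ℝ))⁻¹ else 0) =
          ∑ k ∈ Finset.Icc 1 m, ((k : ℝ))⁻¹ := by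
        intro i
        rw [Finset.sum_comm]
        refine Finset.sum_congr rfl fun k _ => ?_
        rw [Finset.sum_ite_eq' Finset.univ (SIK n i k) (fun _ => ((k : ℝ))⁻¹),
          if_pos (Finset.mem_univ _)]
      rw [Finset.sum_comm, Finset.sum_congr rfl fun i _ => hinner i, Finset.sum_const,
        Finset.card_univ, Fintype.card_fin, nsmul_eq_mul]
    have h2 : ∑ S : Finset (TKVert n), (if n % 2 = 0 ∧ S = Tbal n then (1 : ℝ) else 0) =
        1 - ((n % 2 : ℕ) : ℝ) := by
      rcases Nat.mod_two_eq_zero_or_one n with h | h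
      · have heq : ∀ S : Finset (TKVert n),
            (if n % 2 = 0 ∧ S = Tbal n then (1 : ℝ) else 0) =
            (if S = Tbal n then (1 : ℝ) else 0) := fun S =>
          if_congr ⟨fun hc => hc.2, fun hc => ⟨h, hc⟩⟩ rfl rfl
        rw [Finset.sum_congr rfl fun S _ => heq S,
          Finset.sum_ite_eq' Finset.univ (Tbal n) (fun _ => (1 : ℝ)),
          if_pos (Finset.mem_univ _), h]
        norm_num
      · have heq : ∀ S : Finset (TKVert n),
            (if n % 2 = 0 ∧ S = Tbal n then (1 : ℝ) else 0) = 0 := fun S =>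
          if_neg (fun hc => by omega)
        rw [Finset.sum_congr rfl fun S _ => heq S, Finset.sum_const, smul_zero, h]
        norm_num
    have htot : ∑ S : Finset (TKVert n),
        ((∑ i : Fin n, ∑ k ∈ Finset.Icc 1 m, if S = SIK n i k then ((k : ℝ))⁻¹ else 0) +
          (if n % 2 = 0 ∧ S = Tbal n then 1 else 0)) =
        (n : ℝ) * ((harmonic m : ℚ) : ℝ) + (1 - ((n % 2 : ℕ) : ℝ)) := by
      rw [Finset.sum_add_distrib, h1, h2, harmonic_icc]
    exact htot
end
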